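/- arXiv:2108.01180 — 5 statements merged into one kernel-verified Lean document; each statement's English description precedes it below -/
import Mathlib

section
/- Under the standing hypotheses with 1_g ≠ 0 for all g ∈ 𝒢, let ℋ ∈ wSub_gt(𝒢) with the chosen decomposition and transversals, let T = S^{α_ℋ} and T_{y_j} = S_{y_j}^{α_{ℋ_j(y_j)}} for 1 ≤ j ≤ r. Then 𝒢_T is a wide subgroupoid of 𝒢 if and only if 𝒢(y_j)_{T_{y_j}} is a subgroup of 𝒢(y_j) for all 1 ≤ j ≤ r. -/
open CategoryTheory

namespace PaperGalois

/-- A unital partial action of a groupoid (with object/morphism data given by a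
`CategoryTheory.Groupoid` structure on `Obj`) on a commutative ring `S`.
For a morphism `g : a ⟶ b` (source `a`, target `b`), `e g` is the central idempotent
with `S_g = S • e g`, and `act g s` encodes `α_g(s · 1_{g⁻¹})`. -/
structure UPA (Obj : Type*) [Groupoid Obj] (S : Type*) [CommRing S] where
  e : ∀ ⦃a b : Obj⦄, (a ⟶ b) → S
  act : ∀ ⦃a b : Obj⦄, (a ⟶ b) → S → S
  idem : ∀ ⦃a b : Obj⦄ (g : a ⟶ b), e g * e g = e g
  e_le : ∀ ⦃a b : Obj⦄ (g : a ⟶ b), e g * e (𝟙 b) = e g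
  act_proj : ∀ ⦃a b : Obj⦄ (g : a ⟶ b) (s : S), act g (s * e (Groupoid.inv g)) = act g s
  act_mem : ∀ ⦃a b : Obj⦄ (g : a ⟶ b) (s : S), act g s * e g = act g s
  act_add : ∀ ⦃a b : Obj⦄ (g : a ⟶ b) (s t : S), act g (s + t) = act g s + act g t
  act_mul : ∀ ⦃a b : Obj⦄ (g : a ⟶ b) (s t : S), act g (s * t) = act g s * act g t
  act_unit : ∀ ⦃a b : Obj⦄ (g : a ⟶ b), act g (e (Groupoid.inv g)) = e g
  act_id : ∀ (a : Obj) (s : S), act (𝟙 a) s = s * e (𝟙 a)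
  act_inv : ∀ ⦃a b : Obj⦄ (g : a ⟶ b) (s : S),
      act (Groupoid.inv g) (act g s) = s * e (Groupoid.inv g)
  act_comp : ∀ ⦃a b c : Obj⦄ (h : a ⟶ b) (g : b ⟶ c) (s : S),
      act g (act h s) = act (h ≫ g) s * e g

namespace UPA

variable {Obj : Type*} [Groupoid Obj] {S : Type*} [CommRing S] (α : UPA Obj S)

lemma act_zero ⦃a b : Obj⦄ (g : a ⟶ b) : α.act g 0 = 0 := by
  have h := α.act_add g 0 0
  rw [add_zero] at h
  exact (left_eq_add.mp h)

lemma act_neg ⦃a b : Obj⦄ (g : a ⟶ b) (s : S) : α.act g (-s) = -(α.act g s) := by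
  have h := α.act_add g s (-s)
  rw [add_neg_cancel, α.act_zero] at h
  exact (eq_neg_of_add_eq_zero_right h.symm)

lemma act_one ⦃a b : Obj⦄ (g : a ⟶ b) : α.act g 1 = α.e g := by
  have h := α.act_proj g 1
  rw [one_mul, α.act_unit] at h
  exact h.symm

lemma act_e_src ⦃a b : Obj⦄ (g : a ⟶ b) : α.act g (α.e (𝟙 a)) = α.e g := by
  have h1 : α.e (𝟙 a) * α.e (Groupoid.inv g) = α.e (Groupoid.inv g) := by
    rw [mul_comm]; exact α.e_le (Groupoid.inv g)
  have h2 := α.act_proj g (α.e (𝟙 a))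
  rw [h1, α.act_unit] at h2
  exact h2.symm

/-- The set of `α`-invariant elements of `S` relative to a subgroupoid `H`:
`S^{α_H} = {s ∈ S : α_h(s·1_{h⁻¹}) = s·1_h for all h ∈ H}`. -/
def invSet (H : Subgroupoid Obj) : Set S :=
  {s : S | ∀ ⦃a b : Obj⦄ (h : a ⟶ b), h ∈ H.arrows a b → α.act h s = s * α.e h}

/-- The invariants `S_y^{α_A}` of the corner ring `S_y = S·1_y` under a set `A`
of loops at `y`. -/
def grpInvSet (y : Obj) (A : Set (y ⟶ y)) : Set S :=
  {s : S | s * α.e (𝟙 y) = s ∧ ∀ g ∈ A, α.act g s = s * α.e g}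

/-- The arrows `a ⟶ b` of the groupoid acting trivially on the subset `T ⊆ S`;
for `T` a subring this gives `𝒢_T`. -/
def fixingSet (T : Set S) (a b : Obj) : Set (a ⟶ b) :=
  {g : a ⟶ b | ∀ t ∈ T, α.act g t = t * α.e g}

/-- `⊕_{y ∈ Z} S_y`, the part of `S` supported on a set `Z` of objects. -/
def partSet (Z : Set Obj) : Set S :=
  {s : S | ∀ y : Obj, y ∉ Z → s * α.e (𝟙 y) = 0}

/-- `T·1_y ⊆ S_y` for a subset `T ⊆ S`. -/
def cornerSet (T : Set S) (y : Obj) : Set S :=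
  (fun t => t * α.e (𝟙 y)) '' T

/-- `T' ⊆ S_y` is `α_{𝒢(y,z)}`-strong. -/
def strongAt (T' : Set S) (a b : Obj) : Prop :=
  ∀ g h : a ⟶ b, (h ≫ Groupoid.inv g) ∉ α.fixingSet T' a a →
    ∀ f : S, f * f = f → f ≠ 0 → (f * α.e g = f ∨ f * α.e h = f) →
      ∃ t ∈ T', α.act g t * f ≠ α.act h t * f

/-- `T ⊆ S` is `α`-strong. -/
def IsStrong (T : Set S) : Prop :=
  ∀ a b : Obj, α.strongAt (α.cornerSet T a) a b

/-- Existence of a partial Galois coordinate system for the restriction of `α` to the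
subgroupoid `H` acting on `S_H ⊆ S` (for `H = ⊤`, `Sub = univ` this says that
`S^{α_𝒢} ⊆ S` is an `α_𝒢`-partial Galois extension). -/
def IsGaloisCoordSystem (H : Subgroupoid Obj) (Sub : Set S) : Prop :=
  ∃ (m : ℕ) (av bv : Fin m → S),
    (∀ i, av i ∈ Sub) ∧ (∀ i, bv i ∈ Sub) ∧
    (∀ ⦃a b : Obj⦄ (g : a ⟶ b), g ∈ H.arrows a b → a ≠ b →
        ∑ i, av i * α.act g (bv i) = 0) ∧
    (∀ (a : Obj) (g : a ⟶ a), g ∈ H.arrows a a → g ≠ 𝟙 a →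
        ∑ i, av i * α.act g (bv i) = 0) ∧
    (∀ a : Obj, a ∈ H.objs → ∑ i, av i * α.act (𝟙 a) (bv i) = α.e (𝟙 a))

/-- Group-type condition for the restriction of `α` to `H`, at the base object `u`:
there is a transversal (inside `H`) from `u` to every object of the `H`-component of `u`
whose ideals are as large as possible. -/
def IsGroupTypeAt (H : Subgroupoid Obj) (u : Obj) : Prop :=
  ∃ σ : ∀ v : Obj, (H.arrows u v).Nonempty → (u ⟶ v),
    (∀ v hv, σ v hv ∈ H.arrows u v) ∧
    (∀ h, σ u h = 𝟙 u) ∧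
    (∀ v hv, α.e (Groupoid.inv (σ v hv)) = α.e (𝟙 u) ∧ α.e (σ v hv) = α.e (𝟙 v))

/-- The restriction `α_H` of `α` to the subgroupoid `H` is of group-type. -/
def IsGroupType (H : Subgroupoid Obj) : Prop :=
  ∀ u ∈ H.objs, α.IsGroupTypeAt H u

end UPA

structure SubCorner (S : Type*) [CommRing S] where
  carrier : Set S
  unit : S
  unit_mem : unit ∈ carrier
  mul_unit : ∀ s ∈ carrier, s * unit = s
  add_mem : ∀ ⦃s t : S⦄, s ∈ carrier → t ∈ carrier → s + t ∈ carrier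
  mul_mem : ∀ ⦃s t : S⦄, s ∈ carrier → t ∈ carrier → s * t ∈ carrier
  neg_mem : ∀ ⦃s : S⦄, s ∈ carrier → -s ∈ carrier
  zero_mem : (0 : S) ∈ carrier

namespace SubCorner

variable {S : Type*} [CommRing S]

lemma nsmul_mem (P : SubCorner S) (n : ℕ) {s : S} (hs : s ∈ P.carrier) :
    n • s ∈ P.carrier := by
  induction n with
  | zero => simpa using P.zero_mem
  | succ n ih => rw [succ_nsmul]; exact P.add_mem ih hs

lemma zsmul_mem (P : SubCorner S) (n : ℤ) {s : S} (hs : s ∈ P.carrier) :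
    n • s ∈ P.carrier := by
  cases n with
  | ofNat n => simpa [natCast_zsmul] using P.nsmul_mem n hs
  | negSucc n => rw [negSucc_zsmul]; exact P.neg_mem (P.nsmul_mem (n+1) hs)

instance (P : SubCorner S) : CommRing ↥P.carrier where
  add a b := ⟨a.1 + b.1, P.add_mem a.2 b.2⟩
  mul a b := ⟨a.1 * b.1, P.mul_mem a.2 b.2⟩
  neg a := ⟨-a.1, P.neg_mem a.2⟩
  zero := ⟨0, P.zero_mem⟩
  one := ⟨P.unit, P.unit_mem⟩
  add_assoc a b c := Subtype.ext (add_assoc _ _ _)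
  zero_add a := Subtype.ext (zero_add _)
  add_zero a := Subtype.ext (add_zero _)
  add_comm a b := Subtype.ext (add_comm _ _)
  mul_assoc a b c := Subtype.ext (mul_assoc _ _ _)
  one_mul a := Subtype.ext (by
    show P.unit * a.1 = a.1
    rw [mul_comm]; exact P.mul_unit a.1 a.2)
  mul_one a := Subtype.ext (P.mul_unit a.1 a.2)
  left_distrib a b c := Subtype.ext (left_distrib _ _ _)
  right_distrib a b c := Subtype.ext (right_distrib _ _ _)
  mul_comm a b := Subtype.ext (mul_comm _ _)
  zero_mul a := Subtype.ext (zero_mul _)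
  mul_zero a := Subtype.ext (mul_zero _)
  neg_add_cancel a := Subtype.ext (neg_add_cancel _)
  nsmul n a := ⟨n • a.1, P.nsmul_mem n a.2⟩
  nsmul_zero a := Subtype.ext (zero_nsmul _)
  nsmul_succ n a := Subtype.ext (succ_nsmul _ _)
  zsmul n a := ⟨n • a.1, P.zsmul_mem n a.2⟩
  zsmul_zero' a := Subtype.ext (zero_zsmul _)
  zsmul_succ' n a := Subtype.ext (by
    show ((n.succ : ℤ)) • a.1 = (n : ℤ) • a.1 + a.1
    rw [Int.natCast_succ, add_zsmul, one_zsmul])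
  zsmul_neg' n a := Subtype.ext (by
    show (Int.negSucc n) • a.1 = -(((n.succ : ℤ)) • a.1)
    rw [negSucc_zsmul]
    norm_cast)

def incl {P Q : SubCorner S} (hle : P.carrier ⊆ Q.carrier) (hu : P.unit = Q.unit) :
    ↥P.carrier →+* ↥Q.carrier where
  toFun a := ⟨a.1, hle a.2⟩
  map_one' := Subtype.ext hu
  map_mul' _ _ := rfl
  map_zero' := rfl
  map_add' _ _ := rfl

def IsSepExt (P Q : SubCorner S) (hle : P.carrier ⊆ Q.carrier) (hu : P.unit = Q.unit) : Prop :=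
  letI : Algebra ↥P.carrier ↥Q.carrier := (incl hle hu).toAlgebra
  ∃ ε : TensorProduct ↥P.carrier ↥Q.carrier ↥Q.carrier,
    (∀ t : ↥Q.carrier,
        (TensorProduct.tmul ↥P.carrier t (1 : ↥Q.carrier)) * ε
          = ε * (TensorProduct.tmul ↥P.carrier (1 : ↥Q.carrier) t)) ∧
    LinearMap.mul' ↥P.carrier ↥Q.carrier ε = 1

end SubCorner

/-- A `Subring` of `S`, seen as a corner subring with identity `1`. -/
def Subring.toSC {S : Type*} [CommRing S] (T : Subring S) : SubCorner S where
  carrier := (T : Set S)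
  unit := 1
  unit_mem := T.one_mem
  mul_unit := fun s _ => mul_one s
  add_mem := fun _ _ hs ht => T.add_mem hs ht
  mul_mem := fun _ _ hs ht => T.mul_mem hs ht
  neg_mem := fun _ hs => T.neg_mem hs
  zero_mem := T.zero_mem

namespace UPA

variable {Obj : Type*} [Groupoid Obj] {S : Type*} [CommRing S] (α : UPA Obj S)

lemma invSet_one_mem (H : Subgroupoid Obj) : (1 : S) ∈ α.invSet H :=
  fun _ _ h _ => by rw [α.act_one h, one_mul]

lemma invSet_zero_mem (H : Subgroupoid Obj) : (0 : S) ∈ α.invSet H :=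
  fun _ _ h _ => by rw [α.act_zero h, zero_mul]

lemma invSet_add_mem (H : Subgroupoid Obj) {s t : S} (hs : s ∈ α.invSet H)
    (ht : t ∈ α.invSet H) : s + t ∈ α.invSet H :=
  fun _ _ h hH => by rw [α.act_add h, hs h hH, ht h hH, add_mul]

lemma invSet_mul_mem (H : Subgroupoid Obj) {s t : S} (hs : s ∈ α.invSet H)
    (ht : t ∈ α.invSet H) : s * t ∈ α.invSet H :=
  fun _ _ h hH => by
    rw [α.act_mul h, hs h hH, ht h hH, mul_mul_mul_comm, α.idem h]

lemma invSet_neg_mem (H : Subgroupoid Obj) {s : S} (hs : s ∈ α.invSet H) :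
    -s ∈ α.invSet H :=
  fun _ _ h hH => by rw [α.act_neg h, hs h hH, neg_mul]

/-- The subring of invariants `S^{α_H}` of `S`, a genuine unital subring of `S`. -/
def invariantsSubring (H : Subgroupoid Obj) : Subring S where
  carrier := α.invSet H
  one_mem' := α.invSet_one_mem H
  zero_mem' := α.invSet_zero_mem H
  add_mem' := α.invSet_add_mem H
  mul_mem' := α.invSet_mul_mem H
  neg_mem' := α.invSet_neg_mem H

/-- `S^{α_H}` as a corner subring of `S` (with identity `1`). -/
def invariantsSC (H : Subgroupoid Obj) : SubCorner S where
  carrier := α.invSet H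
  unit := 1
  unit_mem := α.invSet_one_mem H
  mul_unit := fun s _ => mul_one s
  add_mem := fun _ _ hs ht => α.invSet_add_mem H hs ht
  mul_mem := fun _ _ hs ht => α.invSet_mul_mem H hs ht
  neg_mem := fun _ hs => α.invSet_neg_mem H hs
  zero_mem := α.invSet_zero_mem H

lemma grpInvSet_unit_mem (y : Obj) (A : Set (y ⟶ y)) :
    α.e (𝟙 y) ∈ α.grpInvSet y A := by
  refine ⟨α.idem (𝟙 y), fun g _ => ?_⟩
  rw [α.act_e_src g]
  have : α.e (𝟙 y) * α.e g = α.e g := by rw [mul_comm]; exact α.e_le g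
  rw [this]

/-- `S_y^{α_A}` as a corner subring of `S` (with identity `1_y`). -/
def grpInvSC (y : Obj) (A : Set (y ⟶ y)) : SubCorner S where
  carrier := α.grpInvSet y A
  unit := α.e (𝟙 y)
  unit_mem := α.grpInvSet_unit_mem y A
  mul_unit := fun _ hs => hs.1
  add_mem := fun s t hs ht =>
    ⟨by rw [add_mul, hs.1, ht.1], fun g hg => by
      rw [α.act_add g, hs.2 g hg, ht.2 g hg, add_mul]⟩
  mul_mem := fun s t hs ht =>
    ⟨by rw [mul_assoc, ht.1], fun g hg => by
      rw [α.act_mul g, hs.2 g hg, ht.2 g hg, mul_mul_mul_comm, α.idem g]⟩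
  neg_mem := fun s hs =>
    ⟨by rw [neg_mul, hs.1], fun g hg => by rw [α.act_neg g, hs.2 g hg, neg_mul]⟩
  zero_mem := ⟨zero_mul _, fun g _ => by rw [α.act_zero g, zero_mul]⟩

lemma invSet_le (H : Subgroupoid Obj) :
    α.invSet (Subgroupoid.full (Set.univ : Set Obj)) ⊆ α.invSet H :=
  fun _ hs _ _ h _ => hs h ⟨trivial, trivial⟩

lemma invSet_le_subring {T : Subring S}
    (h : ∀ s ∈ α.invSet (Subgroupoid.full (Set.univ : Set Obj)), s ∈ T) :
    (α.invariantsSC (Subgroupoid.full (Set.univ : Set Obj))).carrier ⊆ (Subring.toSC T).carrier :=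
  h

lemma grpInvSet_le (y : Obj) (A : Set (y ⟶ y)) :
    α.grpInvSet y (Set.univ : Set (y ⟶ y)) ⊆ α.grpInvSet y A :=
  fun _ hs => ⟨hs.1, fun g _ => hs.2 g trivial⟩

end UPA

namespace UPA

variable {Obj : Type*} [Groupoid Obj] {S : Type*} [CommRing S] (α : UPA Obj S)

/-- `α_g(1_{g⁻¹}·1_h) = 1_g·1_{hg}` for composable arrows. -/
lemma act_e_comp ⦃a b c : Obj⦄ (h : a ⟶ b) (g : b ⟶ c) :
    α.act g (α.e h) = α.e g * α.e (h ≫ g) := by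
  have hx1 : α.act g (α.e h) * α.e g = α.act g (α.e h) := α.act_mem g _
  have h1 : α.act g (α.e h) = α.act (h ≫ g) (α.e (Groupoid.inv h)) * α.e g := by
    rw [← α.act_unit h, α.act_comp]
  have hx2 : α.act g (α.e h) * α.e (h ≫ g) = α.act g (α.e h) := by
    rw [h1, mul_assoc, mul_comm (α.e g) (α.e (h ≫ g)), ← mul_assoc, α.act_mem]
  have hB : (α.e g * α.e (h ≫ g)) * α.act g (α.e h) = α.e g * α.e (h ≫ g) := by
    have h2 : α.e (h ≫ g) * α.e g = α.act g (α.act h (α.e (Groupoid.inv (h ≫ g)))) := by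
      rw [α.act_comp, α.act_unit]
    have h3 : α.act g (α.act h (α.e (Groupoid.inv (h ≫ g)))) * α.act g (α.e h) =
        α.act g (α.act h (α.e (Groupoid.inv (h ≫ g)))) := by
      rw [← α.act_mul, α.act_mem]
    calc (α.e g * α.e (h ≫ g)) * α.act g (α.e h)
        = (α.e (h ≫ g) * α.e g) * α.act g (α.e h) := by ring
      _ = α.e (h ≫ g) * α.e g := by rw [h2, h3]
      _ = α.e g * α.e (h ≫ g) := mul_comm _ _
  calc α.act g (α.e h) = α.act g (α.e h) * (α.e g * α.e (h ≫ g)) := by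
        rw [← mul_assoc, hx1, hx2]
    _ = (α.e g * α.e (h ≫ g)) * α.act g (α.e h) := mul_comm _ _
    _ = α.e g * α.e (h ≫ g) := hB

lemma id_mem_fixingSet (T' : Set S) (u : Obj) : 𝟙 u ∈ α.fixingSet T' u u :=
  fun t _ => α.act_id u t

lemma inv_mem_fixingSet {T' : Set S} ⦃a b : Obj⦄ {g : a ⟶ b}
    (hg : g ∈ α.fixingSet T' a b) : Groupoid.inv g ∈ α.fixingSet T' b a := by
  intro t ht
  have hinv : Groupoid.inv (Groupoid.inv g) = g := by simp
  have h1 : α.act (Groupoid.inv g) (α.e g) = α.e (Groupoid.inv g) := by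
    have := α.act_unit (Groupoid.inv g)
    rwa [hinv] at this
  have h2 : t * α.e (Groupoid.inv g) = α.act (Groupoid.inv g) (α.act g t) :=
    (α.act_inv g t).symm
  rw [hg t ht, α.act_mul, h1, α.act_mem] at h2
  exact h2.symm

/-- If the first factor is a transversal arrow with full ideals, then
`1_{σ ≫ g} = 1_g`. -/
lemma e_comp_full {p a b : Obj} (σ : p ⟶ a)
    (hσ1 : α.e (Groupoid.inv σ) = α.e (𝟙 p)) (hσ2 : α.e σ = α.e (𝟙 a))
    (g : a ⟶ b) : α.e (σ ≫ g) = α.e g := by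
  have hcomp : Groupoid.inv σ ≫ σ ≫ g = g := by
    rw [← Category.assoc, Groupoid.inv_comp, Category.id_comp]
  have h1 : α.e g = α.e g * α.e (σ ≫ g) := by
    rw [← α.act_e_comp σ g, hσ2, α.act_e_src]
  have h2 : α.e (σ ≫ g) = α.e (σ ≫ g) * α.e g := by
    have hc := α.act_e_comp (Groupoid.inv σ) (σ ≫ g)
    rw [hσ1, α.act_e_src, hcomp] at hc
    exact hc
  rw [h2, mul_comm]
  exact h1.symm

/-- Transport of corners of an invariant element along a transversal arrow of `H`. -/
lemma inv_corner_transport {H : Subgroupoid Obj} {u z : Obj} (σ : u ⟶ z)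
    (hσH : σ ∈ H.arrows u z) (hσ1 : α.e (Groupoid.inv σ) = α.e (𝟙 u))
    (hσ2 : α.e σ = α.e (𝟙 z)) {t : S} (ht : t ∈ α.invSet H) :
    t * α.e (𝟙 z) = α.act σ (t * α.e (𝟙 u)) := by
  rw [← hσ1, α.act_proj, ht σ hσH, hσ2]

lemma corner_mem_grpInvSet {H : Subgroupoid Obj} {u : Obj} (hu : 𝟙 u ∈ H.arrows u u)
    {t : S} (ht : t ∈ α.invSet H) :
    t * α.e (𝟙 u) ∈ α.grpInvSet u (H.arrows u u) := by
  constructor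
  · rw [mul_assoc, α.idem]
  · intro g hg
    rw [α.act_mul, ht g hg, α.act_e_src, mul_assoc, α.idem, mul_assoc,
      mul_comm (α.e (𝟙 u)) (α.e g), α.e_le]

/-- How `α_g` acts on an element whose corner at the source is `α_σ(t')`. -/
lemma act_on_extension {u z b : Obj} (σ : u ⟶ z) (g : z ⟶ b) {t t' : S}
    (hcorner : t * α.e (𝟙 z) = α.act σ t') :
    α.act g t = α.act (σ ≫ g) t' * α.e g := by
  calc α.act g t = α.act g (t * α.e (Groupoid.inv g)) := (α.act_proj g t).symm
    _ = α.act g ((t * α.e (𝟙 z)) * α.e (Groupoid.inv g)) := by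
        rw [mul_assoc, mul_comm (α.e (𝟙 z)) (α.e (Groupoid.inv g)), α.e_le]
    _ = α.act g (t * α.e (𝟙 z)) := α.act_proj g _
    _ = α.act g (α.act σ t') := by rw [hcorner]
    _ = α.act (σ ≫ g) t' * α.e g := α.act_comp σ g t'

/-- Main computation: if `t'` is fixed by the loop `σu ≫ h ≫ σv⁻¹`, then the two
transported actions agree on `S_h`. -/
lemma main_calc {p u v : Obj} (σu : p ⟶ u) (σv : p ⟶ v)
    (hσu2 : α.e σu = α.e (𝟙 u)) (hσv2 : α.e σv = α.e (𝟙 v))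
    (h : u ⟶ v) {t' : S}
    (hinv : α.act (σu ≫ h ≫ Groupoid.inv σv) t'
      = t' * α.e (σu ≫ h ≫ Groupoid.inv σv)) :
    α.act (σu ≫ h) t' * α.e h = α.act σv t' * α.e h := by
  have hlτ : (σu ≫ h ≫ Groupoid.inv σv) ≫ σv = σu ≫ h := by
    rw [Category.assoc, Category.assoc, Groupoid.inv_comp, Category.comp_id]
  have h2 : α.act (σu ≫ h) t'
      = α.act σv (α.act (σu ≫ h ≫ Groupoid.inv σv) t') := by
    have hc := α.act_comp (σu ≫ h ≫ Groupoid.inv σv) σv t'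
    rw [hlτ, hσv2] at hc
    have hm : α.act (σu ≫ h) t' * α.e (𝟙 v) = α.act (σu ≫ h) t' := by
      rw [← α.act_mem (σu ≫ h) t', mul_assoc, α.e_le]
    rw [hc, hm]
  have h4 : α.act σv (α.e (σu ≫ h ≫ Groupoid.inv σv)) = α.e (𝟙 v) * α.e (σu ≫ h) := by
    rw [α.act_e_comp, hlτ, hσv2]
  have h5 : α.e h * α.e (σu ≫ h) = α.e h := by
    have hc := α.act_e_comp σu h
    rw [hσu2, α.act_e_src] at hc
    exact hc.symm
  have h6 : (α.e (𝟙 v) * α.e (σu ≫ h)) * α.e h = α.e h := by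
    rw [mul_assoc, mul_comm (α.e (σu ≫ h)) (α.e h), h5, mul_comm, α.e_le]
  rw [h2, hinv, α.act_mul, h4, mul_assoc, h6]

/-- Converse of the main computation. -/
lemma main_calc_rev {p u v : Obj} (σu : p ⟶ u) (σv : p ⟶ v)
    (hσu1 : α.e (Groupoid.inv σu) = α.e (𝟙 p)) (hσu2 : α.e σu = α.e (𝟙 u))
    (hσv1 : α.e (Groupoid.inv σv) = α.e (𝟙 p))
    (h : u ⟶ v) {t' : S} (ht'1 : t' * α.e (𝟙 p) = t')
    (heq : α.act (σu ≫ h) t' = α.act σv t' * α.e h) :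
    α.act (σu ≫ h ≫ Groupoid.inv σv) t'
      = t' * α.e (σu ≫ h ≫ Groupoid.inv σv) := by
  have hassoc : (σu ≫ h) ≫ Groupoid.inv σv = σu ≫ h ≫ Groupoid.inv σv :=
    Category.assoc _ _ _
  have h0 : α.act (σu ≫ h ≫ Groupoid.inv σv) t' * α.e (𝟙 p)
      = α.act (σu ≫ h ≫ Groupoid.inv σv) t' := by
    rw [← α.act_mem (σu ≫ h ≫ Groupoid.inv σv) t', mul_assoc, α.e_le]
  have h1 : α.act (Groupoid.inv σv) (α.act (σu ≫ h) t')
      = α.act (σu ≫ h ≫ Groupoid.inv σv) t' := by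
    rw [α.act_comp, hassoc, hσv1, h0]
  have h2 : α.act (Groupoid.inv σv) (α.act σv t' * α.e h)
      = (t' * α.e (Groupoid.inv σv)) * (α.e (Groupoid.inv σv) * α.e (h ≫ Groupoid.inv σv)) := by
    rw [α.act_mul, α.act_inv, α.act_e_comp]
  have h3 : α.e (σu ≫ h ≫ Groupoid.inv σv) = α.e (h ≫ Groupoid.inv σv) :=
    α.e_comp_full σu hσu1 hσu2 (h ≫ Groupoid.inv σv)
  rw [← h1, heq, h2, hσv1, h3, ht'1, ← mul_assoc, ht'1]

/-- Extension of an invariant corner element to a global invariant element,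
supported on one connected component of `H`. -/
lemma extension_spec [Fintype Obj] {H : Subgroupoid Obj}
    {r : ℕ} {Y : Fin r → Set Obj}
    (hYcover : ∀ u : Obj, ∃ j, u ∈ Y j)
    (hYdisj : ∀ j k, j ≠ k → ∀ u ∈ Y j, ∀ v ∈ Y k, H.arrows u v = ∅)
    {y : Fin r → Obj}
    {τj : ∀ (j : Fin r) (z : Obj), z ∈ Y j → ((y j) ⟶ z)}
    (hτjH : ∀ j z hz, τj j z hz ∈ H.arrows (y j) z)
    (hτjgt : ∀ j z hz, α.e (Groupoid.inv (τj j z hz)) = α.e (𝟙 (y j)) ∧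
        α.e (τj j z hz) = α.e (𝟙 z))
    (horth : ∀ u w : Obj, u ≠ w → α.e (𝟙 u) * α.e (𝟙 w) = 0)
    (i : Fin r) {t' : S}
    (ht' : t' ∈ α.grpInvSet (y i) (H.arrows (y i) (y i))) :
    ∃ t ∈ α.invSet H,
      (∀ z (hz : z ∈ Y i), t * α.e (𝟙 z) = α.act (τj i z hz) t') ∧
      (∀ w, w ∉ Y i → t * α.e (𝟙 w) = 0) := by
  classical
  obtain ⟨t, htdef⟩ :
      ∃ t : S, t = ∑ z : Obj, if hz : z ∈ Y i then α.act (τj i z hz) t' else 0 :=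
    ⟨_, rfl⟩
  have key : ∀ w : Obj,
      t * α.e (𝟙 w) = if hw : w ∈ Y i then α.act (τj i w hw) t' else 0 := by
    intro w
    have hz0 : ∀ z : Obj, z ≠ w →
        (if hz : z ∈ Y i then α.act (τj i z hz) t' else 0) * α.e (𝟙 w) = 0 := by
      intro z hzw
      by_cases hz : z ∈ Y i
      · rw [dif_pos hz, ← α.act_mem (τj i z hz) t', (hτjgt i z hz).2, mul_assoc,
          horth z w hzw, mul_zero]
      · rw [dif_neg hz, zero_mul]
    have hsum := Fintype.sum_eq_single w hz0
    rw [htdef, Finset.sum_mul, hsum]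
    by_cases hw : w ∈ Y i
    · rw [dif_pos hw, ← α.act_mem (τj i w hw) t', (hτjgt i w hw).2,
        mul_assoc, α.idem]
    · rw [dif_neg hw, zero_mul]
  have key2 : ∀ z (hz : z ∈ Y i), t * α.e (𝟙 z) = α.act (τj i z hz) t' := by
    intro z hz
    rw [key z, dif_pos hz]
  have key2' : ∀ w, w ∉ Y i → t * α.e (𝟙 w) = 0 := by
    intro w hw
    rw [key w, dif_neg hw]
  refine ⟨t, ?_, key2, key2'⟩
  intro u v h hH
  by_cases hu : u ∈ Y i
  · have hv : v ∈ Y i := by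
      by_contra hv
      obtain ⟨k, hk⟩ := hYcover v
      have hik : i ≠ k := fun hik => hv (hik ▸ hk)
      have := hYdisj i k hik u hu v hk
      rw [this] at hH
      exact hH
    have hlH : τj i u hu ≫ h ≫ Groupoid.inv (τj i v hv) ∈ H.arrows (y i) (y i) := by
      rw [← Category.assoc]
      exact H.mul (H.mul (hτjH i u hu) hH) (H.inv (hτjH i v hv))
    calc α.act h t
        = α.act (τj i u hu ≫ h) t' * α.e h := α.act_on_extension (τj i u hu) h (key2 u hu)
      _ = α.act (τj i v hv) t' * α.e h :=
          α.main_calc (τj i u hu) (τj i v hv) (hτjgt i u hu).2 (hτjgt i v hv).2 h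
            (ht'.2 _ hlH)
      _ = (t * α.e (𝟙 v)) * α.e h := by rw [key2 v hv]
      _ = t * α.e h := by rw [mul_assoc, mul_comm (α.e (𝟙 v)) (α.e h), α.e_le]
  · have hv : v ∉ Y i := by
      intro hvY
      obtain ⟨k, hk⟩ := hYcover u
      have hki : k ≠ i := fun hk' => hu (hk' ▸ hk)
      have := hYdisj k i hki u hk v hvY
      rw [this] at hH
      exact hH
    have e1 : t * α.e (Groupoid.inv h) = 0 := by
      have h1 : t * α.e (Groupoid.inv h) = (t * α.e (𝟙 u)) * α.e (Groupoid.inv h) := by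
        rw [mul_assoc, mul_comm (α.e (𝟙 u)) (α.e (Groupoid.inv h)), α.e_le]
      rw [h1, key2' u hu, zero_mul]
    have e2 : t * α.e h = (t * α.e (𝟙 v)) * α.e h := by
      rw [mul_assoc, mul_comm (α.e (𝟙 v)) (α.e h), α.e_le]
    calc α.act h t = α.act h (t * α.e (Groupoid.inv h)) := (α.act_proj h t).symm
      _ = 0 := by rw [e1, α.act_zero]
      _ = t * α.e h := by rw [e2, key2' v hv, zero_mul]

/-- There are no arrows of `𝒢_T` between different connected components of `H`. -/
lemma fix_empty_cross [Fintype Obj] {H : Subgroupoid Obj}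
    {r : ℕ} {Y : Fin r → Set Obj}
    (hYcover : ∀ u : Obj, ∃ j, u ∈ Y j)
    (hYdisj : ∀ j k, j ≠ k → ∀ u ∈ Y j, ∀ v ∈ Y k, H.arrows u v = ∅)
    {y : Fin r → Obj}
    {τj : ∀ (j : Fin r) (z : Obj), z ∈ Y j → ((y j) ⟶ z)}
    (hτjH : ∀ j z hz, τj j z hz ∈ H.arrows (y j) z)
    (hτjgt : ∀ j z hz, α.e (Groupoid.inv (τj j z hz)) = α.e (𝟙 (y j)) ∧
        α.e (τj j z hz) = α.e (𝟙 z))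
    (horth : ∀ u w : Obj, u ≠ w → α.e (𝟙 u) * α.e (𝟙 w) = 0)
    (i : Fin r) {a b : Obj} (ha : a ∈ Y i) (hb : b ∉ Y i)
    {g : a ⟶ b} (hg : g ∈ α.fixingSet (α.invSet H) a b) (hne : α.e g ≠ 0) : False := by
  obtain ⟨t, htH, hcor, hcor'⟩ := α.extension_spec hYcover hYdisj hτjH hτjgt horth i
    (α.grpInvSet_unit_mem (y i) (H.arrows (y i) (y i)))
  have h1 : α.act g t = α.e g := by
    rw [α.act_on_extension (τj i a ha) g (hcor a ha), α.act_e_src (τj i a ha ≫ g),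
      α.e_comp_full (τj i a ha) (hτjgt i a ha).1 (hτjgt i a ha).2 g, α.idem]
  have h2 : t * α.e g = 0 := by
    have h3 : t * α.e g = (t * α.e (𝟙 b)) * α.e g := by
      rw [mul_assoc, mul_comm (α.e (𝟙 b)) (α.e g), α.e_le]
    rw [h3, hcor' b hb, zero_mul]
  exact hne (by rw [← h1, hg t htH, h2])

/-- An arrow of `𝒢_T` within one component of `H` conjugates (via transversals)
to a loop of `𝒢(y i)_{T_{y i}}`. -/
lemma fix_comp_same [Fintype Obj] {H : Subgroupoid Obj}
    {r : ℕ} {Y : Fin r → Set Obj}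
    (hYcover : ∀ u : Obj, ∃ j, u ∈ Y j)
    (hYdisj : ∀ j k, j ≠ k → ∀ u ∈ Y j, ∀ v ∈ Y k, H.arrows u v = ∅)
    {y : Fin r → Obj}
    {τj : ∀ (j : Fin r) (z : Obj), z ∈ Y j → ((y j) ⟶ z)}
    (hτjH : ∀ j z hz, τj j z hz ∈ H.arrows (y j) z)
    (hτjgt : ∀ j z hz, α.e (Groupoid.inv (τj j z hz)) = α.e (𝟙 (y j)) ∧
        α.e (τj j z hz) = α.e (𝟙 z))
    (horth : ∀ u w : Obj, u ≠ w → α.e (𝟙 u) * α.e (𝟙 w) = 0)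
    (i : Fin r) {a b : Obj} (ha : a ∈ Y i) (hb : b ∈ Y i)
    {g : a ⟶ b} (hg : g ∈ α.fixingSet (α.invSet H) a b) :
    (τj i a ha ≫ g ≫ Groupoid.inv (τj i b hb)) ∈
      α.fixingSet (α.grpInvSet (y i) (H.arrows (y i) (y i))) (y i) (y i) := by
  intro t' ht'
  obtain ⟨t, htH, hcor, -⟩ := α.extension_spec hYcover hYdisj hτjH hτjgt horth i ht'
  have h1 : α.act g t = α.act (τj i a ha ≫ g) t' * α.e g :=
    α.act_on_extension _ g (hcor a ha)
  have h2 : t * α.e g = α.act (τj i b hb) t' * α.e g := by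
    rw [← hcor b hb, mul_assoc, mul_comm (α.e (𝟙 b)) (α.e g), α.e_le]
  have heq0 : α.act (τj i a ha ≫ g) t' * α.e g = α.act (τj i b hb) t' * α.e g := by
    rw [← h1, hg t htH, h2]
  have hmem : α.act (τj i a ha ≫ g) t' * α.e g = α.act (τj i a ha ≫ g) t' := by
    have hm := α.act_mem (τj i a ha ≫ g) t'
    rwa [α.e_comp_full (τj i a ha) (hτjgt i a ha).1 (hτjgt i a ha).2 g] at hm
  exact α.main_calc_rev (τj i a ha) (τj i b hb) (hτjgt i a ha).1 (hτjgt i a ha).2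
    (hτjgt i b hb).1 g ht'.1 (by rw [← hmem, heq0])

/-- Conversely, such a conjugated loop condition puts the arrow in `𝒢_T`. -/
lemma fix_comp_same_rev {H : Subgroupoid Obj} (hwide : H.IsWide)
    {r : ℕ} {Y : Fin r → Set Obj}
    {y : Fin r → Obj}
    {τj : ∀ (j : Fin r) (z : Obj), z ∈ Y j → ((y j) ⟶ z)}
    (hτjH : ∀ j z hz, τj j z hz ∈ H.arrows (y j) z)
    (hτjgt : ∀ j z hz, α.e (Groupoid.inv (τj j z hz)) = α.e (𝟙 (y j)) ∧
        α.e (τj j z hz) = α.e (𝟙 z))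
    {i : Fin r} {a b : Obj} (ha : a ∈ Y i) (hb : b ∈ Y i) (g : a ⟶ b)
    (hl : (τj i a ha ≫ g ≫ Groupoid.inv (τj i b hb)) ∈
      α.fixingSet (α.grpInvSet (y i) (H.arrows (y i) (y i))) (y i) (y i)) :
    g ∈ α.fixingSet (α.invSet H) a b := by
  intro t ht
  have ht' : t * α.e (𝟙 (y i)) ∈ α.grpInvSet (y i) (H.arrows (y i) (y i)) :=
    α.corner_mem_grpInvSet (hwide.wide (y i)) ht
  have hca : t * α.e (𝟙 a) = α.act (τj i a ha) (t * α.e (𝟙 (y i))) :=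
    α.inv_corner_transport (τj i a ha) (hτjH i a ha) (hτjgt i a ha).1 (hτjgt i a ha).2 ht
  have hcb : t * α.e (𝟙 b) = α.act (τj i b hb) (t * α.e (𝟙 (y i))) :=
    α.inv_corner_transport (τj i b hb) (hτjH i b hb) (hτjgt i b hb).1 (hτjgt i b hb).2 ht
  have h1 : α.act g t = α.act (τj i a ha ≫ g) (t * α.e (𝟙 (y i))) * α.e g :=
    α.act_on_extension (τj i a ha) g hca
  have h2 := α.main_calc (τj i a ha) (τj i b hb) (hτjgt i a ha).2 (hτjgt i b hb).2 g
    (hl _ ht')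
  rw [h1, h2, ← hcb, mul_assoc, mul_comm (α.e (𝟙 b)) (α.e g), α.e_le]

/-- A loop at `y j` fixing `T_{y j}` fixes all of `T = S^{α_H}`. -/
lemma mem_fix_of_fixloop {H : Subgroupoid Obj} (hwide : H.IsWide) {p : Obj}
    {g : p ⟶ p} (hg : g ∈ α.fixingSet (α.grpInvSet p (H.arrows p p)) p p) :
    g ∈ α.fixingSet (α.invSet H) p p := by
  intro t ht
  have h1 : α.act g t = α.act g (t * α.e (𝟙 p)) := by
    rw [← α.act_proj g t, ← α.act_proj g (t * α.e (𝟙 p)), mul_assoc,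
      mul_comm (α.e (𝟙 p)) (α.e (Groupoid.inv g)), α.e_le]
  rw [h1, hg _ (α.corner_mem_grpInvSet (hwide.wide p) ht), mul_assoc,
    mul_comm (α.e (𝟙 p)) (α.e g), α.e_le]

/-- A loop at `y j` fixing `T = S^{α_H}` fixes `T_{y j}`. -/
lemma fixloop_of_mem_fix [Fintype Obj] {H : Subgroupoid Obj}
    {r : ℕ} {Y : Fin r → Set Obj}
    (hYcover : ∀ u : Obj, ∃ j, u ∈ Y j)
    (hYdisj : ∀ j k, j ≠ k → ∀ u ∈ Y j, ∀ v ∈ Y k, H.arrows u v = ∅)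
    {y : Fin r → Obj}
    {τj : ∀ (j : Fin r) (z : Obj), z ∈ Y j → ((y j) ⟶ z)}
    (hτjH : ∀ j z hz, τj j z hz ∈ H.arrows (y j) z)
    (hτjgt : ∀ j z hz, α.e (Groupoid.inv (τj j z hz)) = α.e (𝟙 (y j)) ∧
        α.e (τj j z hz) = α.e (𝟙 z))
    (horth : ∀ u w : Obj, u ≠ w → α.e (𝟙 u) * α.e (𝟙 w) = 0)
    (j : Fin r) (hyj : y j ∈ Y j) (hid : τj j (y j) hyj = 𝟙 (y j))
    {g : (y j) ⟶ (y j)} (hg : g ∈ α.fixingSet (α.invSet H) (y j) (y j)) :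
    g ∈ α.fixingSet (α.grpInvSet (y j) (H.arrows (y j) (y j))) (y j) (y j) := by
  have h := α.fix_comp_same hYcover hYdisj hτjH hτjgt horth j hyj hyj hg
  have hinv1 : Groupoid.inv (𝟙 (y j)) = 𝟙 (y j) := by simp
  rwa [hid, hinv1, Category.id_comp, Category.comp_id] at h

end UPA

/-- **Proposition 4.3 (i).**  Standing hypotheses, with `1_g ≠ 0` for all `g`.  With
`ℋ ∈ wSub_gt(𝒢)`, its component data and `T = S^{α_ℋ}`, `T_{y_j} = S_{y_j}^{α_{ℋ_j(y_j)}}`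
as before: `𝒢_T` is a wide subgroupoid of `𝒢` if and only if `𝒢(y_j)_{T_{y_j}}` is a
subgroup of the isotropy group `𝒢(y_j)` for every `1 ≤ j ≤ r`. -/
theorem fixing_subgroupoid_iff_subgroups
    {Obj : Type*} [Groupoid Obj] [Fintype Obj] [∀ a b : Obj, Finite (a ⟶ b)]
    {S : Type*} [CommRing S] (α : UPA Obj S)
    (hsum : ∑ y : Obj, α.e (𝟙 y) = 1)
    (horth : ∀ y z : Obj, y ≠ z → α.e (𝟙 y) * α.e (𝟙 z) = 0)
    (hconn : ∀ a b : Obj, Nonempty (a ⟶ b))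
    (x : Obj) (τ : ∀ y : Obj, x ⟶ y) (hτx : τ x = 𝟙 x)
    (hgt : ∀ y : Obj, α.e (Groupoid.inv (τ y)) = α.e (𝟙 x) ∧ α.e (τ y) = α.e (𝟙 y))
    (hne : ∀ ⦃a b : Obj⦄ (g : a ⟶ b), α.e g ≠ 0)
    (H : Subgroupoid Obj) (hwide : H.IsWide)
    (r : ℕ) (Y : Fin r → Set Obj)
    (hYcover : ∀ u : Obj, ∃ j, u ∈ Y j)
    (hYconn : ∀ j, ∀ u ∈ Y j, ∀ v ∈ Y j, (H.arrows u v).Nonempty)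
    (hYdisj : ∀ j k, j ≠ k → ∀ u ∈ Y j, ∀ v ∈ Y k, H.arrows u v = ∅)
    (y : Fin r → Obj) (hy : ∀ j, y j ∈ Y j)
    (τj : ∀ (j : Fin r) (z : Obj), z ∈ Y j → ((y j) ⟶ z))
    (hτjH : ∀ j z hz, τj j z hz ∈ H.arrows (y j) z)
    (hτjid : ∀ j, τj j (y j) (hy j) = 𝟙 (y j))
    (hτjgt : ∀ j z hz, α.e (Groupoid.inv (τj j z hz)) = α.e (𝟙 (y j)) ∧
        α.e (τj j z hz) = α.e (𝟙 z)) :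
    ((∃ K : Subgroupoid Obj, K.IsWide ∧
        ∀ u v : Obj, K.arrows u v = α.fixingSet (α.invSet H) u v) ↔
      (∀ j : Fin r,
        𝟙 (y j) ∈ α.fixingSet (α.grpInvSet (y j) (H.arrows (y j) (y j))) (y j) (y j) ∧
        (∀ g ∈ α.fixingSet (α.grpInvSet (y j) (H.arrows (y j) (y j))) (y j) (y j),
          ∀ h ∈ α.fixingSet (α.grpInvSet (y j) (H.arrows (y j) (y j))) (y j) (y j),
            g ≫ h ∈ α.fixingSet (α.grpInvSet (y j) (H.arrows (y j) (y j))) (y j) (y j)) ∧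
        (∀ g ∈ α.fixingSet (α.grpInvSet (y j) (H.arrows (y j) (y j))) (y j) (y j),
          Groupoid.inv g ∈
            α.fixingSet (α.grpInvSet (y j) (H.arrows (y j) (y j))) (y j) (y j)))) := by
  constructor
  · rintro ⟨K, hKw, hKarr⟩ j
    refine ⟨α.id_mem_fixingSet _ _, ?_, fun g hg => α.inv_mem_fixingSet hg⟩
    intro g hg h hh
    have hg' : g ∈ K.arrows (y j) (y j) := by
      rw [hKarr]; exact α.mem_fix_of_fixloop hwide hg
    have hh' : h ∈ K.arrows (y j) (y j) := by
      rw [hKarr]; exact α.mem_fix_of_fixloop hwide hh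
    have hgh := K.mul hg' hh'
    rw [hKarr] at hgh
    exact α.fixloop_of_mem_fix hYcover hYdisj hτjH hτjgt horth j (hy j) (hτjid j) hgh
  · intro hyp
    refine ⟨⟨fun a b => α.fixingSet (α.invSet H) a b,
      fun {c d p} hp => α.inv_mem_fixingSet hp, ?_⟩,
      ⟨fun c => α.id_mem_fixingSet _ c⟩, fun u v => rfl⟩
    intro c d e' p hp q hq
    obtain ⟨i, hc⟩ := hYcover c
    have hd : d ∈ Y i := by
      by_contra hd
      exact α.fix_empty_cross hYcover hYdisj hτjH hτjgt horth i hc hd hp (hne p)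
    have he : e' ∈ Y i := by
      by_contra he
      exact α.fix_empty_cross hYcover hYdisj hτjH hτjgt horth i hd he hq (hne q)
    have h1 := α.fix_comp_same hYcover hYdisj hτjH hτjgt horth i hc hd hp
    have h2 := α.fix_comp_same hYcover hYdisj hτjH hτjgt horth i hd he hq
    have h3 := (hyp i).2.1 _ h1 _ h2
    have hassoc : (τj i c hc ≫ p ≫ Groupoid.inv (τj i d hd)) ≫
        (τj i d hd ≫ q ≫ Groupoid.inv (τj i e' he)) =
        τj i c hc ≫ (p ≫ q) ≫ Groupoid.inv (τj i e' he) := by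
      simp
    rw [hassoc] at h3
    exact α.fix_comp_same_rev hwide hτjH hτjgt hc he (p ≫ q) h3

end PaperGalois
end

section
/- Under the standing hypotheses with 1_g ≠ 0 for all g ∈ 𝒢, let ℋ ∈ wSub_gt(𝒢) with the chosen decomposition and transversals, let T = S^{α_ℋ} and T_{y_j} = S_{y_j}^{α_{ℋ_j(y_j)}} for 1 ≤ j ≤ r. Then 𝒢_T = ℋ if and only if 𝒢(y_j)_{T_{y_j}} = ℋ_j(y_j) for all 1 ≤ j ≤ r. -/
open CategoryTheory

namespace PaperGalois

section Aux

variable {Obj : Type*} [Groupoid Obj] {S : Type*} [CommRing S] (α : UPA Obj S)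

lemma UPA.act_proj_src ⦃a b : Obj⦄ (g : a ⟶ b) (s : S) :
    α.act g (s * α.e (𝟙 a)) = α.act g s := by
  rw [α.act_mul, α.act_e_src, α.act_mem]

lemma UPA.e_comp_mul ⦃a b c : Obj⦄ (h : a ⟶ b) (g : b ⟶ c) :
    α.act g (α.e h) = α.e (h ≫ g) * α.e g := by
  have h0 := α.act_comp h g 1
  rwa [α.act_one, α.act_one] at h0

lemma UPA.e_full_comp ⦃y u v : Obj⦄ (τ : y ⟶ u) (g : u ⟶ v)
    (h1 : α.e (Groupoid.inv τ) = α.e (𝟙 y)) (h2 : α.e τ = α.e (𝟙 u)) :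
    α.e (τ ≫ g) = α.e g := by
  have ha : α.e g = α.e (τ ≫ g) * α.e g := by
    have h0 := α.e_comp_mul τ g
    rwa [h2, α.act_e_src] at h0
  have hb : α.e (τ ≫ g) = α.e g * α.e (τ ≫ g) := by
    have h0 := α.e_comp_mul (Groupoid.inv τ) (τ ≫ g)
    have hc : Groupoid.inv τ ≫ τ ≫ g = g := by
      rw [← Category.assoc, Groupoid.inv_comp, Category.id_comp]
    rwa [h1, hc, α.act_e_src] at h0
  calc α.e (τ ≫ g) = α.e g * α.e (τ ≫ g) := hb
    _ = α.e (τ ≫ g) * α.e g := mul_comm _ _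
    _ = α.e g := ha.symm

lemma UPA.act_of_other ⦃a b : Obj⦄ (g : a ⟶ b) (z : Obj) (s : S)
    (hoz : α.e (𝟙 z) * α.e (𝟙 a) = 0) (hs : s * α.e (𝟙 z) = s) :
    α.act g s = 0 := by
  have h0 : s * α.e (Groupoid.inv g) = 0 := by
    calc s * α.e (Groupoid.inv g)
        = s * α.e (𝟙 z) * α.e (Groupoid.inv g) := by rw [hs]
      _ = s * α.e (𝟙 z) * (α.e (Groupoid.inv g) * α.e (𝟙 a)) := by
          rw [α.e_le (Groupoid.inv g)]
      _ = s * α.e (Groupoid.inv g) * (α.e (𝟙 z) * α.e (𝟙 a)) := by ring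
      _ = 0 := by rw [hoz, mul_zero]
  rw [← α.act_proj g s, h0, α.act_zero]

end Aux

/-- **Proposition 4.3 (ii).**  Standing hypotheses, with `1_g ≠ 0` for all `g`.  With
`ℋ ∈ wSub_gt(𝒢)`, its component data and `T = S^{α_ℋ}`, `T_{y_j} = S_{y_j}^{α_{ℋ_j(y_j)}}`
as before: `𝒢_T = ℋ` if and only if `𝒢(y_j)_{T_{y_j}} = ℋ_j(y_j)` for all `1 ≤ j ≤ r`. -/
theorem fixing_eq_iff_isotropy_eq
    {Obj : Type*} [Groupoid Obj] [Fintype Obj] [∀ a b : Obj, Finite (a ⟶ b)]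
    {S : Type*} [CommRing S] (α : UPA Obj S)
    (hsum : ∑ y : Obj, α.e (𝟙 y) = 1)
    (horth : ∀ y z : Obj, y ≠ z → α.e (𝟙 y) * α.e (𝟙 z) = 0)
    (hconn : ∀ a b : Obj, Nonempty (a ⟶ b))
    (x : Obj) (τ : ∀ y : Obj, x ⟶ y) (hτx : τ x = 𝟙 x)
    (hgt : ∀ y : Obj, α.e (Groupoid.inv (τ y)) = α.e (𝟙 x) ∧ α.e (τ y) = α.e (𝟙 y))
    (hne : ∀ ⦃a b : Obj⦄ (g : a ⟶ b), α.e g ≠ 0)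
    (H : Subgroupoid Obj) (hwide : H.IsWide)
    (r : ℕ) (Y : Fin r → Set Obj)
    (hYcover : ∀ u : Obj, ∃ j, u ∈ Y j)
    (hYconn : ∀ j, ∀ u ∈ Y j, ∀ v ∈ Y j, (H.arrows u v).Nonempty)
    (hYdisj : ∀ j k, j ≠ k → ∀ u ∈ Y j, ∀ v ∈ Y k, H.arrows u v = ∅)
    (y : Fin r → Obj) (hy : ∀ j, y j ∈ Y j)
    (τj : ∀ (j : Fin r) (z : Obj), z ∈ Y j → ((y j) ⟶ z))
    (hτjH : ∀ j z hz, τj j z hz ∈ H.arrows (y j) z)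
    (hτjid : ∀ j, τj j (y j) (hy j) = 𝟙 (y j))
    (hτjgt : ∀ j z hz, α.e (Groupoid.inv (τj j z hz)) = α.e (𝟙 (y j)) ∧
        α.e (τj j z hz) = α.e (𝟙 z)) :
    ((∀ u v : Obj, α.fixingSet (α.invSet H) u v = H.arrows u v) ↔
      ∀ j : Fin r,
        α.fixingSet (α.grpInvSet (y j) (H.arrows (y j) (y j))) (y j) (y j)
          = H.arrows (y j) (y j)) := by
  classical
  -- objects connected in `H` lie in the same component
  have hsame : ∀ ⦃a b : Obj⦄, (H.arrows a b).Nonempty → ∀ j : Fin r, a ∈ Y j → b ∈ Y j := by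
    intro a b hab j haj
    obtain ⟨m, hbm⟩ := hYcover b
    by_cases hjm : j = m
    · subst hjm; exact hbm
    · exfalso
      obtain ⟨h, hh⟩ := hab
      rw [hYdisj j m hjm a haj b hbm] at hh
      exact absurd hh (Set.notMem_empty _)
  -- corner of a supported sum
  have corner : ∀ (F : Obj → S), (∀ z, F z * α.e (𝟙 z) = F z) →
      ∀ w : Obj, (∑ z : Obj, F z) * α.e (𝟙 w) = F w := by
    intro F hF1 w
    rw [Finset.sum_mul, Finset.sum_eq_single w]
    · exact hF1 w
    · intro z _ hzw
      rw [← hF1 z, mul_assoc, horth z w hzw, mul_zero]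
    · intro hw; exact absurd (Finset.mem_univ w) hw
  -- action on a supported sum
  have actsum : ∀ (F : Obj → S), (∀ z, F z * α.e (𝟙 z) = F z) →
      ∀ ⦃a b : Obj⦄ (h : a ⟶ b), α.act h (∑ z : Obj, F z) = α.act h (F a) := by
    intro F hF1 a b h
    have hmap : α.act h (∑ z : Obj, F z) = ∑ z : Obj, α.act h (F z) :=
      map_sum (AddMonoidHom.mk' (α.act h) (α.act_add h)) F Finset.univ
    rw [hmap, Finset.sum_eq_single a]
    · intro z _ hza
      exact α.act_of_other h z (F z) (horth z a hza) (hF1 z)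
    · intro ha; exact absurd (Finset.mem_univ a) ha
  -- sums of compatible local data are invariant
  have spread : ∀ (j : Fin r) (F : Obj → S)
      (hF1 : ∀ z, F z * α.e (𝟙 z) = F z) (hF0 : ∀ z, z ∉ Y j → F z = 0)
      (hF2 : ∀ ⦃a b : Obj⦄ (h : a ⟶ b), h ∈ H.arrows a b → a ∈ Y j → b ∈ Y j →
          α.act h (F a) = F b * α.e h),
      (∑ z : Obj, F z) ∈ α.invSet H := by
    intro j F hF1 hF0 hF2 a b h hH
    rw [actsum F hF1 h]
    have hRHS : (∑ z : Obj, F z) * α.e h = F b * α.e h := by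
      calc (∑ z : Obj, F z) * α.e h
          = (∑ z : Obj, F z) * (α.e h * α.e (𝟙 b)) := by rw [α.e_le]
        _ = (∑ z : Obj, F z) * α.e (𝟙 b) * α.e h := by ring
        _ = F b * α.e h := by rw [corner F hF1 b]
    rw [hRHS]
    by_cases ha : a ∈ Y j
    · exact hF2 h hH ha (hsame ⟨h, hH⟩ j ha)
    · have hb : b ∉ Y j := fun hb => ha (hsame ⟨Groupoid.inv h, H.inv hH⟩ j hb)
      rw [hF0 a ha, hF0 b hb, α.act_zero, zero_mul]
  constructor
  · -- forward direction
    intro hfix j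
    apply Set.eq_of_subset_of_subset
    · intro l hl
      rw [← hfix (y j) (y j)]
      intro t ht
      have hs : t * α.e (𝟙 (y j)) ∈ α.grpInvSet (y j) (H.arrows (y j) (y j)) := by
        constructor
        · rw [mul_assoc, α.idem]
        · intro g hg
          rw [α.act_proj_src, ht g hg, mul_assoc, mul_comm (α.e (𝟙 (y j))) (α.e g),
            α.e_le]
      have h1 := hl _ hs
      rw [α.act_proj_src] at h1
      rw [h1, mul_assoc, mul_comm (α.e (𝟙 (y j))) (α.e l), α.e_le]
    · intro l hl t ht
      exact ht.2 l hl
  · -- backward direction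
    intro hiso u v
    apply Set.eq_of_subset_of_subset
    · intro g hg
      obtain ⟨j, hu⟩ := hYcover u
      -- first: v is in the same component as u
      have hv : v ∈ Y j := by
        by_contra hv
        set F0 : Obj → S := fun z => if z ∈ Y j then α.e (𝟙 z) else 0 with hF0def
        have hF1 : ∀ z, F0 z * α.e (𝟙 z) = F0 z := by
          intro z
          by_cases hz : z ∈ Y j
          · rw [hF0def]; simp only [if_pos hz]; exact α.idem _
          · rw [hF0def]; simp only [if_neg hz, zero_mul]
        have hmem : (∑ z : Obj, F0 z) ∈ α.invSet H := by
          refine spread j F0 hF1 (fun z hz => by rw [hF0def]; simp only [if_neg hz]) ?_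
          intro a b h hH ha hb
          rw [hF0def]; simp only [if_pos ha, if_pos hb]
          rw [α.act_e_src, mul_comm, α.e_le]
        have h1 := hg _ hmem
        have h2 : α.act g (∑ z : Obj, F0 z) = α.e g := by
          rw [actsum F0 hF1 g, hF0def]
          simp only [if_pos hu]
          exact α.act_e_src g
        have h3 : (∑ z : Obj, F0 z) * α.e g = 0 := by
          calc (∑ z : Obj, F0 z) * α.e g
              = (∑ z : Obj, F0 z) * (α.e g * α.e (𝟙 v)) := by rw [α.e_le]
            _ = (∑ z : Obj, F0 z) * α.e (𝟙 v) * α.e g := by ring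
            _ = 0 := by rw [corner F0 hF1 v, hF0def]; simp only [if_neg hv, zero_mul]
        exact hne g (by rw [← h2, h1, h3])
      -- the conjugated loop at the base point
      have hlfix : (τj j u hu ≫ g ≫ Groupoid.inv (τj j v hv)) ∈
          α.fixingSet (α.grpInvSet (y j) (H.arrows (y j) (y j))) (y j) (y j) := by
        intro s hs
        set F : Obj → S := fun z => if hz : z ∈ Y j then α.act (τj j z hz) s else 0
          with hFdef
        have hF1 : ∀ z, F z * α.e (𝟙 z) = F z := by
          intro z
          by_cases hz : z ∈ Y j
          · rw [hFdef]; simp only [dif_pos hz]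
            rw [← (hτjgt j z hz).2, α.act_mem]
          · rw [hFdef]; simp only [dif_neg hz, zero_mul]
        have hF0 : ∀ z, z ∉ Y j → F z = 0 := by
          intro z hz; rw [hFdef]; simp only [dif_neg hz]
        have hF2 : ∀ ⦃a b : Obj⦄ (h : a ⟶ b), h ∈ H.arrows a b → a ∈ Y j → b ∈ Y j →
            α.act h (F a) = F b * α.e h := by
          intro a b h hH ha hb
          rw [hFdef]; simp only [dif_pos ha, dif_pos hb]
          set k := τj j a ha ≫ h ≫ Groupoid.inv (τj j b hb) with hk
          have hkH : k ∈ H.arrows (y j) (y j) :=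
            H.mul (hτjH j a ha) (H.mul hH (H.inv (hτjH j b hb)))
          have hks := hs.2 k hkH
          have hcomp : k ≫ τj j b hb = τj j a ha ≫ h := by
            rw [hk]; simp only [Category.assoc, Groupoid.inv_comp, Category.comp_id]
          have e1 : α.act (τj j b hb) (α.act k s)
              = α.act (τj j a ha ≫ h) s * α.e (𝟙 b) := by
            rw [α.act_comp, hcomp, (hτjgt j b hb).2]
          have e2 : α.act (τj j b hb) (α.act k s)
              = α.act (τj j b hb) s * (α.e (τj j a ha ≫ h) * α.e (𝟙 b)) := by
            rw [hks, α.act_mul, α.e_comp_mul, hcomp, (hτjgt j b hb).2]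
          have e3 : α.e (τj j a ha ≫ h) * α.e h = α.e h := by
            have h0 := α.e_comp_mul (τj j a ha) h
            rw [(hτjgt j a ha).2, α.act_e_src] at h0
            exact h0.symm
          calc α.act h (α.act (τj j a ha) s)
              = α.act (τj j a ha ≫ h) s * α.e h := α.act_comp _ _ s
            _ = α.act (τj j a ha ≫ h) s * α.e (𝟙 b) * α.e h := by
                rw [mul_assoc, mul_comm (α.e (𝟙 b)) (α.e h), α.e_le]
            _ = α.act (τj j b hb) s * (α.e (τj j a ha ≫ h) * α.e (𝟙 b)) * α.e h := by
                rw [← e2, e1]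
            _ = α.act (τj j b hb) s * (α.e (τj j a ha ≫ h) * α.e h) * α.e (𝟙 b) := by
                ring
            _ = α.act (τj j b hb) s * α.e h * α.e (𝟙 b) := by rw [e3]
            _ = α.act (τj j b hb) s * α.e h := by
                rw [mul_assoc, mul_comm (α.e h) (α.e (𝟙 b)), ← mul_assoc,
                  mul_assoc, mul_comm (α.e (𝟙 b)) (α.e h), α.e_le]
        have htmem : (∑ z : Obj, F z) ∈ α.invSet H := spread j F hF1 hF0 hF2
        have hgt' := hg _ htmem
        -- LHS of the invariance of the sum under g
        have h5 : α.act g (∑ z : Obj, F z) = α.act (τj j u hu ≫ g) s * α.e g := by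
          rw [actsum F hF1 g, hFdef]
          simp only [dif_pos hu]
          exact α.act_comp _ _ s
        have h6 : (∑ z : Obj, F z) * α.e g = α.act (τj j v hv) s * α.e g := by
          calc (∑ z : Obj, F z) * α.e g
              = (∑ z : Obj, F z) * (α.e g * α.e (𝟙 v)) := by rw [α.e_le]
            _ = (∑ z : Obj, F z) * α.e (𝟙 v) * α.e g := by ring
            _ = α.act (τj j v hv) s * α.e g := by
                rw [corner F hF1 v, hFdef]; simp only [dif_pos hv]
        have h7 : α.act (τj j u hu ≫ g) s * α.e g = α.act (τj j v hv) s * α.e g := by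
          rw [← h5, hgt', h6]
        have hefull : α.e (τj j u hu ≫ g) = α.e g :=
          α.e_full_comp (τj j u hu) g (hτjgt j u hu).1 (hτjgt j u hu).2
        have h8 : α.act (τj j u hu ≫ g) s = α.act (τj j v hv) s * α.e g := by
          rw [← α.act_mem (τj j u hu ≫ g) s, hefull, h7]
        have h9 : α.act (Groupoid.inv (τj j v hv)) (α.act (τj j u hu ≫ g) s)
            = α.act (τj j u hu ≫ g ≫ Groupoid.inv (τj j v hv)) s := by
          have h0 := α.act_comp (τj j u hu ≫ g) (Groupoid.inv (τj j v hv)) s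
          have hassoc : (τj j u hu ≫ g) ≫ Groupoid.inv (τj j v hv)
              = τj j u hu ≫ g ≫ Groupoid.inv (τj j v hv) := by
            rw [Category.assoc]
          rw [hassoc, (hτjgt j v hv).1] at h0
          rw [h0]
          set l := τj j u hu ≫ g ≫ Groupoid.inv (τj j v hv) with hl
          calc α.act l s * α.e (𝟙 (y j))
              = α.act l s * α.e l * α.e (𝟙 (y j)) := by rw [α.act_mem]
            _ = α.act l s * (α.e l * α.e (𝟙 (y j))) := by rw [mul_assoc]
            _ = α.act l s := by rw [α.e_le, α.act_mem]
        have h10 : α.act (τj j u hu ≫ g ≫ Groupoid.inv (τj j v hv)) s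
            = s * α.e (g ≫ Groupoid.inv (τj j v hv)) := by
          rw [← h9, h8, α.act_mul, α.act_inv, α.e_comp_mul g (Groupoid.inv (τj j v hv)),
            (hτjgt j v hv).1, hs.1, α.e_le]
        have h11 : α.e (τj j u hu ≫ g ≫ Groupoid.inv (τj j v hv))
            = α.e (g ≫ Groupoid.inv (τj j v hv)) :=
          α.e_full_comp (τj j u hu) (g ≫ Groupoid.inv (τj j v hv))
            (hτjgt j u hu).1 (hτjgt j u hu).2
        rw [h10, h11]
      have hlH : (τj j u hu ≫ g ≫ Groupoid.inv (τj j v hv)) ∈ H.arrows (y j) (y j) := by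
        rw [← hiso j]; exact hlfix
      have hgid : Groupoid.inv (τj j u hu) ≫
          (τj j u hu ≫ g ≫ Groupoid.inv (τj j v hv)) ≫ τj j v hv = g := by
        simp only [Category.assoc, Groupoid.inv_comp, Category.comp_id]
        rw [← Category.assoc, Groupoid.inv_comp, Category.id_comp]
      rw [← hgid]
      exact H.mul (H.inv (hτjH j u hu)) (H.mul hlH (hτjH j v hv))
    · intro h hh t ht
      exact ht h hh

end PaperGalois
end

section
/- Under the standing hypotheses, if S^{α_𝒢} ⊆ S is an α_𝒢-partial Galois extension, then for every y ∈ 𝒢₀ the extension S_y^{α_{𝒢(y)}} ⊆ S_y is an α_{𝒢(y)}-partial Galois extension, where α_{𝒢(y)} = (S_g, α_g)_{g∈𝒢(y)} is the restriction of α to the isotropy group 𝒢(y) acting partially on S_y. -/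
open CategoryTheory

namespace PaperGalois

/-- **Lemma 5.1.**  Standing hypotheses.  If `S^{α_𝒢} ⊆ S` is an `α_𝒢`-partial Galois
extension, then for every `y ∈ 𝒢₀`, `S_y^{α_{𝒢(y)}} ⊆ S_y` is an `α_{𝒢(y)}`-partial Galois
extension, where `𝒢(y)` is the isotropy group at `y` (realized as the full subgroupoid on
`{y}`) acting partially on the corner `S_y = S·1_y`. -/
theorem galois_restricts_to_isotropy
    {Obj : Type*} [Groupoid Obj] [Fintype Obj] [∀ a b : Obj, Finite (a ⟶ b)]
    {S : Type*} [CommRing S] (α : UPA Obj S)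
    (hsum : ∑ y : Obj, α.e (𝟙 y) = 1)
    (horth : ∀ y z : Obj, y ≠ z → α.e (𝟙 y) * α.e (𝟙 z) = 0)
    (hconn : ∀ a b : Obj, Nonempty (a ⟶ b))
    (x : Obj) (τ : ∀ y : Obj, x ⟶ y) (hτx : τ x = 𝟙 x)
    (hgt : ∀ y : Obj, α.e (Groupoid.inv (τ y)) = α.e (𝟙 x) ∧ α.e (τ y) = α.e (𝟙 y))
    (hGal : α.IsGaloisCoordSystem (Subgroupoid.full (Set.univ : Set Obj)) (Set.univ : Set S)) :
    ∀ y : Obj,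
      α.IsGaloisCoordSystem (Subgroupoid.full ({y} : Set Obj))
        {s : S | s * α.e (𝟙 y) = s} := by
  intro y
  -- key absorption lemma: act g (s * e(𝟙 a)) = act g s for g : a ⟶ b
  have absorb : ∀ ⦃a b : Obj⦄ (g : a ⟶ b) (s : S),
      α.act g (s * α.e (𝟙 a)) = α.act g s := by
    intro a b g s
    have h1 : s * α.e (𝟙 a) * α.e (Groupoid.inv g) = s * α.e (Groupoid.inv g) := by
      rw [mul_assoc, mul_comm (α.e (𝟙 a)), α.e_le (Groupoid.inv g)]
    calc α.act g (s * α.e (𝟙 a))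
        = α.act g (s * α.e (𝟙 a) * α.e (Groupoid.inv g)) := (α.act_proj g _).symm
      _ = α.act g (s * α.e (Groupoid.inv g)) := by rw [h1]
      _ = α.act g s := α.act_proj g s
  obtain ⟨m, av, bv, -, -, hne, hloop, hid⟩ := hGal
  refine ⟨m, fun i => av i * α.e (𝟙 y), fun i => bv i * α.e (𝟙 y),
    fun i => by show av i * α.e (𝟙 y) * α.e (𝟙 y) = _; rw [mul_assoc, α.idem],
    fun i => by show bv i * α.e (𝟙 y) * α.e (𝟙 y) = _; rw [mul_assoc, α.idem], ?_, ?_, ?_⟩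
  · intro a b g hg hab
    rw [Subgroupoid.mem_full_iff] at hg
    exact absurd (hg.1.trans hg.2.symm) hab
  · intro a g hg hgne
    rw [Subgroupoid.mem_full_iff] at hg
    have ha : a = y := hg.1
    subst ha
    have key : ∑ i, av i * α.e (𝟙 a) * α.act g (bv i * α.e (𝟙 a))
        = (∑ i, av i * α.act g (bv i)) * α.e (𝟙 a) := by
      rw [Finset.sum_mul]
      refine Finset.sum_congr rfl fun i _ => ?_
      rw [absorb g (bv i), mul_assoc, mul_comm (α.e (𝟙 a)), mul_assoc]
    simp only []
    rw [key, hloop a g ⟨trivial, trivial⟩ hgne, zero_mul]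
  · intro a ha
    rw [Subgroupoid.mem_full_objs_iff] at ha
    have ha' : a = y := ha
    subst ha'
    have key : ∑ i, av i * α.e (𝟙 a) * α.act (𝟙 a) (bv i * α.e (𝟙 a))
        = (∑ i, av i * α.act (𝟙 a) (bv i)) * α.e (𝟙 a) := by
      rw [Finset.sum_mul]
      refine Finset.sum_congr rfl fun i _ => ?_
      rw [absorb (𝟙 a) (bv i), mul_assoc, mul_comm (α.e (𝟙 a)), mul_assoc]
    simp only []
    rw [key, hid a ⟨𝟙 a, trivial, trivial⟩, α.idem]

end PaperGalois
end

section
/- Under the standing hypotheses with 1_g ≠ 0 for all g ∈ 𝒢, let ℋ ∈ wSub_gt(𝒢) with the chosen decomposition and transversals, let T = S^{α_ℋ} and T_{y_j} = S_{y_j}^{α_{ℋ_j(y_j)}} for 1 ≤ j ≤ r. The following are equivalent: (i) T is α-strong; (ii) for any g, h ∈ 𝒢 with t(g) = t(h) and g⁻¹h ∉ 𝒢_T and for any nonzero idempotent e ∈ S_g ∪ S_h, there exists t ∈ T such that α_g(t·1_{g⁻¹})·e ≠ α_h(t·1_{h⁻¹})·e; (iii) T_{y_j} is α_{𝒢(y_j,y_j)}-strong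 for all 1 ≤ j ≤ r. -/
open CategoryTheory

namespace PaperGalois

namespace UPA

variable {Obj : Type*} [Groupoid Obj] {S : Type*} [CommRing S] (α : UPA Obj S)

/-! ### Auxiliary lemmas for Proposition 5.4 -/

lemma ginv_inv {a b : Obj} (g : a ⟶ b) : Groupoid.inv (Groupoid.inv g) = g := by
  simp [Groupoid.inv_eq_inv]

lemma ginv_comp {a b c : Obj} (g : a ⟶ b) (h : b ⟶ c) :
    Groupoid.inv (g ≫ h) = Groupoid.inv h ≫ Groupoid.inv g := by
  simp [Groupoid.inv_eq_inv]

lemma act_src {a b : Obj} (g : a ⟶ b) (s : S) :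
    α.act g (s * α.e (𝟙 a)) = α.act g s := by
  have h1 : α.e (𝟙 a) * α.e (Groupoid.inv g) = α.e (Groupoid.inv g) := by
    rw [mul_comm]; exact α.e_le (Groupoid.inv g)
  rw [← α.act_proj g (s * α.e (𝟙 a)), mul_assoc, h1, α.act_proj]

lemma act_tgt {a b : Obj} (g : a ⟶ b) (s : S) :
    α.act g s * α.e (𝟙 b) = α.act g s := by
  conv_lhs => rw [← α.act_mem g s]
  rw [mul_assoc, α.e_le, α.act_mem]

lemma act_inv' {a b : Obj} (g : a ⟶ b) (s : S) :
    α.act g (α.act (Groupoid.inv g) s) = s * α.e g := by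
  have h := α.act_inv (Groupoid.inv g) s
  rwa [ginv_inv] at h

/-- Post-composition with an arrow whose ideal is the full target corner. -/
lemma act_comp_full {a b c : Obj} (k : a ⟶ b) (δ : b ⟶ c)
    (hδ : α.e δ = α.e (𝟙 c)) (s : S) :
    α.act (k ≫ δ) s = α.act δ (α.act k s) := by
  rw [α.act_comp k δ s, hδ, α.act_tgt]

/-- Pre-composition with a "full" arrow does not change the ideal. -/
lemma e_precomp_full {a b c : Obj} (σ : a ⟶ b) (hσ1 : α.e σ = α.e (𝟙 b))
    (hσ2 : α.e (Groupoid.inv σ) = α.e (𝟙 a)) (k : b ⟶ c) :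
    α.e (σ ≫ k) = α.e k := by
  have h1 : α.e k = α.e (σ ≫ k) * α.e k := by
    have h := α.act_comp σ k 1
    simp only [α.act_one] at h
    rwa [hσ1, α.act_e_src] at h
  have h2 : α.e (σ ≫ k) = α.e k * α.e (σ ≫ k) := by
    have h := α.act_comp (Groupoid.inv σ) (σ ≫ k) 1
    simp only [α.act_one] at h
    rw [hσ2, α.act_e_src, ← Category.assoc, Groupoid.inv_comp, Category.id_comp] at h
    exact h
  calc α.e (σ ≫ k) = α.e k * α.e (σ ≫ k) := h2
    _ = α.e (σ ≫ k) * α.e k := mul_comm _ _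
    _ = α.e k := h1.symm

lemma act_precomp_full {a b c : Obj} (σ : a ⟶ b) (hσ1 : α.e σ = α.e (𝟙 b))
    (hσ2 : α.e (Groupoid.inv σ) = α.e (𝟙 a)) (k : b ⟶ c) (s : S) :
    α.act (σ ≫ k) s = α.act k (α.act σ s) := by
  rw [α.act_comp σ k s, ← α.e_precomp_full σ hσ1 hσ2 k, α.act_mem]

lemma full_comp {a b c : Obj} (σ₁ : a ⟶ b) (σ₂ : b ⟶ c)
    (h1 : α.e σ₁ = α.e (𝟙 b)) (h1' : α.e (Groupoid.inv σ₁) = α.e (𝟙 a))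
    (h2 : α.e σ₂ = α.e (𝟙 c)) (h2' : α.e (Groupoid.inv σ₂) = α.e (𝟙 b)) :
    α.e (σ₁ ≫ σ₂) = α.e (𝟙 c) ∧ α.e (Groupoid.inv (σ₁ ≫ σ₂)) = α.e (𝟙 a) := by
  constructor
  · rw [α.e_precomp_full σ₁ h1 h1' σ₂, h2]
  · rw [ginv_comp]
    rw [α.e_precomp_full (Groupoid.inv σ₂) h2' (by rwa [ginv_inv]) (Groupoid.inv σ₁), h1']

lemma act_inj {a b : Obj} (g : a ⟶ b) (hg : α.e (Groupoid.inv g) = α.e (𝟙 a))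
    {u v : S} (hu : u * α.e (𝟙 a) = u) (hv : v * α.e (𝟙 a) = v)
    (h : α.act g u = α.act g v) : u = v := by
  have h2 := congrArg (α.act (Groupoid.inv g)) h
  rwa [α.act_inv, α.act_inv, hg, hu, hv] at h2

lemma e_postcomp_full {a b c : Obj} (k : a ⟶ b) (δ : b ⟶ c)
    (hδ : α.e δ = α.e (𝟙 c)) :
    α.e (k ≫ δ) = α.act δ (α.e k) := by
  rw [← α.act_one (k ≫ δ), α.act_comp_full k δ hδ 1, α.act_one]

end UPA

/-- **Proposition 5.4.**  Standing hypotheses, with `1_g ≠ 0` for all `g`.  Let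
`ℋ ∈ wSub_gt(𝒢)` with its component data, `T = S^{α_ℋ}` and
`T_{y_j} = S_{y_j}^{α_{ℋ_j(y_j)}}`.  The following are equivalent:
(i) `T` is `α`-strong;
(ii) for any `g, h ∈ 𝒢` with `t(g) = t(h)` and `g⁻¹h ∉ 𝒢_T`, and every nonzero idempotent
`f ∈ S_g ∪ S_h`, there is `t ∈ T` with `α_g(t·1_{g⁻¹})·f ≠ α_h(t·1_{h⁻¹})·f`;
(iii) `T_{y_j}` is `α_{𝒢(y_j,y_j)}`-strong for all `1 ≤ j ≤ r`. -/
theorem strong_tfae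
    {Obj : Type*} [Groupoid Obj] [Fintype Obj] [∀ a b : Obj, Finite (a ⟶ b)]
    {S : Type*} [CommRing S] (α : UPA Obj S)
    (hsum : ∑ y : Obj, α.e (𝟙 y) = 1)
    (horth : ∀ y z : Obj, y ≠ z → α.e (𝟙 y) * α.e (𝟙 z) = 0)
    (hconn : ∀ a b : Obj, Nonempty (a ⟶ b))
    (x : Obj) (τ : ∀ y : Obj, x ⟶ y) (hτx : τ x = 𝟙 x)
    (hgt : ∀ y : Obj, α.e (Groupoid.inv (τ y)) = α.e (𝟙 x) ∧ α.e (τ y) = α.e (𝟙 y))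
    (hne : ∀ ⦃a b : Obj⦄ (g : a ⟶ b), α.e g ≠ 0)
    (H : Subgroupoid Obj) (hwide : H.IsWide)
    (r : ℕ) (Y : Fin r → Set Obj)
    (hYcover : ∀ u : Obj, ∃ j, u ∈ Y j)
    (hYconn : ∀ j, ∀ u ∈ Y j, ∀ v ∈ Y j, (H.arrows u v).Nonempty)
    (hYdisj : ∀ j k, j ≠ k → ∀ u ∈ Y j, ∀ v ∈ Y k, H.arrows u v = ∅)
    (y : Fin r → Obj) (hy : ∀ j, y j ∈ Y j)
    (τj : ∀ (j : Fin r) (z : Obj), z ∈ Y j → ((y j) ⟶ z))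
    (hτjH : ∀ j z hz, τj j z hz ∈ H.arrows (y j) z)
    (hτjid : ∀ j, τj j (y j) (hy j) = 𝟙 (y j))
    (hτjgt : ∀ j z hz, α.e (Groupoid.inv (τj j z hz)) = α.e (𝟙 (y j)) ∧
        α.e (τj j z hz) = α.e (𝟙 z)) :
    (α.IsStrong (α.invSet H) ↔
      (∀ ⦃a b c : Obj⦄ (g : a ⟶ c) (h : b ⟶ c),
        (h ≫ Groupoid.inv g) ∉ α.fixingSet (α.invSet H) b a →
        ∀ f : S, f * f = f → f ≠ 0 → (f * α.e g = f ∨ f * α.e h = f) →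
          ∃ t ∈ α.invSet H, α.act g t * f ≠ α.act h t * f)) ∧
    (α.IsStrong (α.invSet H) ↔
      ∀ j : Fin r,
        α.strongAt (α.grpInvSet (y j) (H.arrows (y j) (y j))) (y j) (y j)) := by
  classical
  -- components are disjoint
  have hdisj' : ∀ {j k : Fin r} {w : Obj}, w ∈ Y j → w ∈ Y k → j = k := by
    intro j k w hj hk
    by_contra hjk
    have h1 := hwide.wide w
    rw [hYdisj j k hjk w hj w hk] at h1
    exact Set.notMem_empty _ h1
  -- arrows of H stay in a component
  have hcompY : ∀ {u v : Obj} {k : u ⟶ v}, k ∈ H.arrows u v → ∀ {j}, u ∈ Y j → v ∈ Y j := by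
    intro u v k hk j hu
    obtain ⟨j', hv⟩ := hYcover v
    by_cases hjj : j = j'
    · exact hjj ▸ hv
    · exfalso
      have h0 := hYdisj j j' hjj u hu v hv
      rw [h0] at hk
      exact Set.notMem_empty _ hk
  -- the component indicator idempotents
  have husum : ∀ (j : Fin r) (w : Obj),
      (∑ z : Obj, if z ∈ Y j then α.e (𝟙 z) else 0) * α.e (𝟙 w)
        = if w ∈ Y j then α.e (𝟙 w) else 0 := by
    intro j w
    rw [Finset.sum_mul, Finset.sum_eq_single w]
    · by_cases hw : w ∈ Y j
      · rw [if_pos hw]; exact α.idem (𝟙 w)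
      · rw [if_neg hw]; exact zero_mul _
    · intro z _ hz
      by_cases hzj : z ∈ Y j
      · rw [if_pos hzj]; exact horth z w hz
      · rw [if_neg hzj, zero_mul]
    · intro hw; exact absurd (Finset.mem_univ w) hw
  have hu_inv : ∀ j : Fin r,
      (∑ z : Obj, if z ∈ Y j then α.e (𝟙 z) else 0) ∈ α.invSet H := by
    intro j a b k hk
    obtain ⟨j', haj'⟩ := hYcover a
    have hbj' : b ∈ Y j' := hcompY hk haj'
    have hiff : a ∈ Y j ↔ b ∈ Y j := by
      constructor
      · intro hh; rwa [hdisj' hh haj']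
      · intro hh; rwa [hdisj' hh hbj']
    have hL : α.act k (∑ z : Obj, if z ∈ Y j then α.e (𝟙 z) else 0)
        = if a ∈ Y j then α.e k else 0 := by
      rw [← α.act_src k (∑ z : Obj, if z ∈ Y j then α.e (𝟙 z) else 0), husum j a]
      by_cases hh : a ∈ Y j
      · simp only [if_pos hh]; exact α.act_e_src k
      · simp only [if_neg hh]; exact α.act_zero k
    have hR : (∑ z : Obj, if z ∈ Y j then α.e (𝟙 z) else 0) * α.e k
        = if b ∈ Y j then α.e k else 0 := by
      have h1 : α.e (𝟙 b) * α.e k = α.e k := by rw [mul_comm]; exact α.e_le k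
      rw [← h1, ← mul_assoc, husum j b]
      by_cases hh : b ∈ Y j
      · simp only [if_pos hh]
      · simp only [if_neg hh, zero_mul]
    rw [hL, hR]
    by_cases hh : a ∈ Y j
    · rw [if_pos hh, if_pos (hiff.mp hh)]
    · rw [if_neg hh, if_neg fun hb => hh (hiff.mpr hb)]
  -- T·1_{y_j} = S_{y_j}^{α_{H_j(y_j)}}
  have hcorner : ∀ j : Fin r,
      α.cornerSet (α.invSet H) (y j) = α.grpInvSet (y j) (H.arrows (y j) (y j)) := by
    intro j
    apply Set.Subset.antisymm
    · rintro t' ⟨t, ht, rfl⟩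
      refine ⟨by rw [mul_assoc, α.idem], ?_⟩
      intro g hg
      have h1 : α.e (𝟙 (y j)) * α.e g = α.e g := by rw [mul_comm]; exact α.e_le g
      rw [α.act_src g t, ht g hg, mul_assoc, h1]
    · intro s hs
      obtain ⟨hs1, hs2⟩ := hs
      have htmul : ∀ w : Obj,
          (∑ z : Obj, if hz : z ∈ Y j then α.act (τj j z hz) s else 0) * α.e (𝟙 w)
            = if hw : w ∈ Y j then α.act (τj j w hw) s else 0 := by
        intro w
        rw [Finset.sum_mul, Finset.sum_eq_single w]
        · by_cases hw : w ∈ Y j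
          · rw [dif_pos hw, α.act_tgt]
          · rw [dif_neg hw, zero_mul]
        · intro z _ hzw
          by_cases hz : z ∈ Y j
          · rw [dif_pos hz, ← α.act_tgt (τj j z hz) s, mul_assoc, horth z w hzw, mul_zero]
          · rw [dif_neg hz, zero_mul]
        · intro hw; exact absurd (Finset.mem_univ w) hw
      refine ⟨∑ z : Obj, if hz : z ∈ Y j then α.act (τj j z hz) s else 0, ?_, ?_⟩
      · intro a b k hk
        by_cases ha : a ∈ Y j
        · have hb : b ∈ Y j := hcompY hk ha
          have hτa := hτjgt j a ha
          have hτb := hτjgt j b hb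
          have hlH : τj j a ha ≫ k ≫ Groupoid.inv (τj j b hb) ∈ H.arrows (y j) (y j) :=
            H.mul (hτjH j a ha) (H.mul hk (H.inv (hτjH j b hb)))
          have hlc : (τj j a ha ≫ k ≫ Groupoid.inv (τj j b hb)) ≫ τj j b hb
              = τj j a ha ≫ k := by
            simp [Groupoid.inv_eq_inv]
          have hel : α.act (τj j b hb)
              (α.e (τj j a ha ≫ k ≫ Groupoid.inv (τj j b hb))) = α.e k := by
            rw [← α.act_one (τj j a ha ≫ k ≫ Groupoid.inv (τj j b hb)),
              ← α.act_comp_full _ (τj j b hb) hτb.2 1, hlc, α.act_one,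
              α.e_precomp_full (τj j a ha) hτa.2 hτa.1 k]
          have h1 : α.e (𝟙 b) * α.e k = α.e k := by rw [mul_comm]; exact α.e_le k
          have hLHS : α.act k (∑ z : Obj, if hz : z ∈ Y j then α.act (τj j z hz) s else 0)
              = α.act (τj j b hb) s * α.e k := by
            rw [← α.act_src k (∑ z : Obj, if hz : z ∈ Y j then α.act (τj j z hz) s else 0),
              htmul a, dif_pos ha,
              ← α.act_precomp_full (τj j a ha) hτa.2 hτa.1 k s, ← hlc,
              α.act_comp_full _ (τj j b hb) hτb.2 s, hs2 _ hlH, α.act_mul, hel]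
          have hRHS : (∑ z : Obj, if hz : z ∈ Y j then α.act (τj j z hz) s else 0) * α.e k
              = α.act (τj j b hb) s * α.e k := by
            rw [← h1, ← mul_assoc, htmul b, dif_pos hb, h1]
          rw [hLHS, hRHS]
        · have hb : b ∉ Y j := fun hb => ha (hcompY (H.inv hk) hb)
          have h1 : α.e (𝟙 b) * α.e k = α.e k := by rw [mul_comm]; exact α.e_le k
          rw [← α.act_src k (∑ z : Obj, if hz : z ∈ Y j then α.act (τj j z hz) s else 0),
            htmul a, dif_neg ha, α.act_zero, ← h1, ← mul_assoc, htmul b, dif_neg hb, zero_mul]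
      · show (∑ z : Obj, if hz : z ∈ Y j then α.act (τj j z hz) s else 0)
            * α.e (𝟙 (y j)) = s
        rw [htmul (y j), dif_pos (hy j), hτjid j, α.act_id, hs1]
  -- transfer between the corner version and the plain version of strongness
  have hcfix : ∀ (a : Obj) (l : a ⟶ a),
      l ∈ α.fixingSet (α.cornerSet (α.invSet H) a) a a ↔
        l ∈ α.fixingSet (α.invSet H) a a := by
    intro a l
    have h1 : α.e (𝟙 a) * α.e l = α.e l := by rw [mul_comm]; exact α.e_le l
    constructor
    · intro hfix t ht
      have h2 := hfix (t * α.e (𝟙 a)) ⟨t, ht, rfl⟩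
      rwa [α.act_src, mul_assoc, h1] at h2
    · rintro hfix t' ⟨t, ht, rfl⟩
      rw [α.act_src, hfix t ht, mul_assoc, h1]
  have hPmain : α.IsStrong (α.invSet H) ↔
      ∀ (a b : Obj) (g h : a ⟶ b), (h ≫ Groupoid.inv g) ∉ α.fixingSet (α.invSet H) a a →
        ∀ f : S, f * f = f → f ≠ 0 → (f * α.e g = f ∨ f * α.e h = f) →
          ∃ t ∈ α.invSet H, α.act g t * f ≠ α.act h t * f := by
    constructor
    · intro hst a b g h hfix f hf2 hf0 hfe
      obtain ⟨t', ht', hne'⟩ :=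
        hst a b g h (fun hmem => hfix ((hcfix a _).mp hmem)) f hf2 hf0 hfe
      obtain ⟨t, ht, rfl⟩ := ht'
      exact ⟨t, ht, by rwa [α.act_src, α.act_src] at hne'⟩
    · intro hQ a b g h hfix f hf2 hf0 hfe
      obtain ⟨t, ht, hne⟩ :=
        hQ a b g h (fun hmem => hfix ((hcfix a _).mpr hmem)) f hf2 hf0 hfe
      refine ⟨t * α.e (𝟙 a), ⟨t, ht, rfl⟩, ?_⟩
      rwa [α.act_src, α.act_src]
  constructor
  · -- (i) ↔ (ii)
    constructor
    · intro hst
      rw [hPmain] at hst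
      intro a b c g h hfix f hf2 hf0 hfe
      by_cases hba : b = a
      · subst hba
        exact hst _ _ g h hfix f hf2 hf0 hfe
      · obtain ⟨j, haj⟩ := hYcover a
        obtain ⟨k', hbk'⟩ := hYcover b
        by_cases hjk : j = k'
        · subst hjk
          -- a and b lie in the same component
          obtain ⟨σ, hσH, hσ1, hσ2⟩ : ∃ σ : a ⟶ b, σ ∈ H.arrows a b ∧
              α.e σ = α.e (𝟙 b) ∧ α.e (Groupoid.inv σ) = α.e (𝟙 a) := by
            refine ⟨Groupoid.inv (τj j a haj) ≫ τj j b hbk',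
              H.mul (H.inv (hτjH j a haj)) (hτjH j b hbk'), ?_⟩
            have h1 := hτjgt j a haj
            have h2 := hτjgt j b hbk'
            have h3 := α.full_comp (Groupoid.inv (τj j a haj)) (τj j b hbk')
              h1.1 (by rw [UPA.ginv_inv]; exact h1.2) h2.2 h2.1
            exact ⟨h3.1, h3.2⟩
          have hacts : ∀ t ∈ α.invSet H, α.act (σ ≫ h) t = α.act h t := by
            intro t ht
            rw [α.act_precomp_full σ hσ1 hσ2 h t, ht σ hσH, hσ1, α.act_src]
          have heσh : α.e (σ ≫ h) = α.e h := α.e_precomp_full σ hσ1 hσ2 h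
          have hfix' : (σ ≫ h) ≫ Groupoid.inv g ∉ α.fixingSet (α.invSet H) a a := by
            intro hmem
            apply hfix
            intro t ht
            have h2 := hmem t ht
            rw [Category.assoc, α.act_precomp_full σ hσ1 hσ2 _ t, ht σ hσH, hσ1, α.act_src,
              α.e_precomp_full σ hσ1 hσ2 _] at h2
            exact h2
          have hfe' : f * α.e g = f ∨ f * α.e (σ ≫ h) = f := by
            rcases hfe with h1 | h1
            · exact Or.inl h1
            · right; rw [heσh]; exact h1
          obtain ⟨t, ht, hne⟩ := hst a c g (σ ≫ h) hfix' f hf2 hf0 hfe'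
          exact ⟨t, ht, by rwa [hacts t ht] at hne⟩
        · -- a and b lie in different components
          rcases hfe with hfg | hfh
          · refine ⟨∑ z : Obj, if z ∈ Y j then α.e (𝟙 z) else 0, hu_inv j, ?_⟩
            have hg1 : α.act g (∑ z : Obj, if z ∈ Y j then α.e (𝟙 z) else 0) = α.e g := by
              rw [← α.act_src g (∑ z : Obj, if z ∈ Y j then α.e (𝟙 z) else 0),
                husum j a, if_pos haj]
              exact α.act_e_src g
            have hh1 : α.act h (∑ z : Obj, if z ∈ Y j then α.e (𝟙 z) else 0) = 0 := by
              have hbj : b ∉ Y j := fun hb => hjk (hdisj' hb hbk')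
              rw [← α.act_src h (∑ z : Obj, if z ∈ Y j then α.e (𝟙 z) else 0),
                husum j b, if_neg hbj]
              exact α.act_zero h
            rw [hg1, hh1, zero_mul, mul_comm, hfg]
            exact hf0
          · refine ⟨∑ z : Obj, if z ∈ Y k' then α.e (𝟙 z) else 0, hu_inv k', ?_⟩
            have hg1 : α.act g (∑ z : Obj, if z ∈ Y k' then α.e (𝟙 z) else 0) = 0 := by
              have haj' : a ∉ Y k' := fun ha' => hjk (hdisj' haj ha')
              rw [← α.act_src g (∑ z : Obj, if z ∈ Y k' then α.e (𝟙 z) else 0),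
                husum k' a, if_neg haj']
              exact α.act_zero g
            have hh1 : α.act h (∑ z : Obj, if z ∈ Y k' then α.e (𝟙 z) else 0) = α.e h := by
              rw [← α.act_src h (∑ z : Obj, if z ∈ Y k' then α.e (𝟙 z) else 0),
                husum k' b, if_pos hbk']
              exact α.act_e_src h
            rw [hg1, hh1, zero_mul, mul_comm, hfh]
            exact Ne.symm hf0
    · intro hQ
      rw [hPmain]
      intro a b g h hfix f hf2 hf0 hfe
      exact hQ g h hfix f hf2 hf0 hfe
  · -- (i) ↔ (iii)
    constructor
    · intro hst j
      have h1 := hst (y j) (y j)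
      rwa [hcorner j] at h1
    · intro h3 a b g h hfix f hf2 hf0 hfe
      obtain ⟨j, ha⟩ := hYcover a
      obtain ⟨σa, hσaH, hσa1, hσa2⟩ : ∃ σa : y j ⟶ a, σa ∈ H.arrows (y j) a ∧
          α.e σa = α.e (𝟙 a) ∧ α.e (Groupoid.inv σa) = α.e (𝟙 (y j)) :=
        ⟨τj j a ha, hτjH j a ha, (hτjgt j a ha).2, (hτjgt j a ha).1⟩
      obtain ⟨δ, hδ1, hδ2⟩ : ∃ δ : b ⟶ y j,
          α.e δ = α.e (𝟙 (y j)) ∧ α.e (Groupoid.inv δ) = α.e (𝟙 b) := by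
        refine ⟨Groupoid.inv (τ b) ≫ τ (y j), ?_⟩
        have h1 := hgt b
        have h2 := hgt (y j)
        have h4 := α.full_comp (Groupoid.inv (τ b)) (τ (y j))
          h1.1 (by rw [UPA.ginv_inv]; exact h1.2) h2.2 h2.1
        exact ⟨h4.1, h4.2⟩
      have hσat : ∀ t ∈ α.invSet H,
          α.act σa (t * α.e (𝟙 (y j))) = t * α.e (𝟙 a) := by
        intro t ht
        rw [α.act_src, ht _ hσaH, hσa1]
      have hσat' : ∀ t ∈ α.invSet H,
          α.act (Groupoid.inv σa) (t * α.e (𝟙 a)) = t * α.e (𝟙 (y j)) := by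
        intro t ht
        rw [α.act_src, ht _ (H.inv hσaH), hσa2]
      have hact' : ∀ (k : a ⟶ b) (s : S),
          α.act (σa ≫ (k ≫ δ)) s = α.act δ (α.act k (α.act σa s)) := by
        intro k s
        rw [α.act_precomp_full σa hσa1 hσa2, α.act_comp_full k δ hδ1]
      have he' : ∀ k : a ⟶ b, α.e (σa ≫ (k ≫ δ)) = α.act δ (α.e k) := by
        intro k
        rw [α.e_precomp_full σa hσa1 hσa2, α.e_postcomp_full k δ hδ1]
      have hfb : f * α.e (𝟙 b) = f := by
        rcases hfe with h1 | h1
        · rw [← h1, mul_assoc, α.e_le]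
        · rw [← h1, mul_assoc, α.e_le]
      have hf'0 : α.act δ f ≠ 0 := by
        intro h0
        apply hf0
        have h5 := congrArg (α.act (Groupoid.inv δ)) h0
        rwa [α.act_inv, hδ2, hfb, α.act_zero] at h5
      have hf'2 : α.act δ f * α.act δ f = α.act δ f := by rw [← α.act_mul, hf2]
      have hm : (σa ≫ (h ≫ δ)) ≫ Groupoid.inv (σa ≫ (g ≫ δ))
          = σa ≫ ((h ≫ Groupoid.inv g) ≫ Groupoid.inv σa) := by
        simp [Groupoid.inv_eq_inv]
      have hmfix : (σa ≫ (h ≫ δ)) ≫ Groupoid.inv (σa ≫ (g ≫ δ))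
          ∉ α.fixingSet (α.grpInvSet (y j) (H.arrows (y j) (y j))) (y j) (y j) := by
        intro hmem
        apply hfix
        rintro t' ⟨t, ht, rfl⟩
        have htmem : t * α.e (𝟙 (y j)) ∈ α.grpInvSet (y j) (H.arrows (y j) (y j)) := by
          rw [← hcorner j]; exact ⟨t, ht, rfl⟩
        have h2 := hmem _ htmem
        rw [hm, α.act_precomp_full σa hσa1 hσa2 _ _,
          α.act_comp_full _ (Groupoid.inv σa) hσa2 _,
          α.e_precomp_full σa hσa1 hσa2 _,
          α.e_postcomp_full _ (Groupoid.inv σa) hσa2,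
          hσat t ht, ← hσat' t ht, ← α.act_mul] at h2
        refine α.act_inj (Groupoid.inv σa) (by rw [UPA.ginv_inv]; exact hσa1) ?_ ?_ h2
        · rw [α.act_tgt]
        · rw [mul_assoc (t * α.e (𝟙 a)), α.e_le]
      have hfe' : α.act δ f * α.e (σa ≫ (g ≫ δ)) = α.act δ f ∨
          α.act δ f * α.e (σa ≫ (h ≫ δ)) = α.act δ f := by
        rcases hfe with h1 | h1
        · left; rw [he' g, ← α.act_mul, h1]
        · right; rw [he' h, ← α.act_mul, h1]
      obtain ⟨t, htT', hne⟩ := h3 j (σa ≫ (g ≫ δ)) (σa ≫ (h ≫ δ)) hmfix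
        (α.act δ f) hf'2 hf'0 hfe'
      rw [← hcorner j] at htT'
      obtain ⟨t0, ht0, rfl⟩ := htT'
      refine ⟨t0 * α.e (𝟙 a), ⟨t0, ht0, rfl⟩, ?_⟩
      intro heq
      apply hne
      rw [hact' g _, hact' h _, hσat t0 ht0, ← α.act_mul, ← α.act_mul, heq]

end PaperGalois
end

section
/- Let 𝒢 be a finite, not necessarily connected, groupoid and α = (S_g, α_g)_{g∈𝒢} a unital global action of 𝒢 on a commutative ring S = ⊕_{y∈𝒢₀} S_y with S_g = S·1_g and 1_g ≠ 0 for all g ∈ 𝒢, and suppose S is an α_𝒢-partial Galois extension of S^{α_𝒢}. Let ℋ be a wide subgroupoid of 𝒢, let 𝒢 = 𝒢₁ ∪̇ … ∪̇ 𝒢_r be the decomposition of 𝒢 into connected components, set ℋ_j := ℋ ∩ 𝒢_j, and let ℋ_j = ℋ_{j,1} ∪̇ … ∪̇ ℋ_{j,n_j} be the decomposition of ℋ_j into connected components, where ℋ_{j,i} has object set Y_{j,i}; choose y_{j,i} ∈ Y_{j,i} for all i, j. Then S^{α_ℋ} is isomorphic as a ring to ⊕_{j=1}^r ⊕_{i=1}^{n_j}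 S_{y_{j,i}}^{α_{ℋ_{j,i}(y_{j,i})}}. -/
open CategoryTheory

namespace PaperGalois

/-- **Proposition 5.10 (global case, invariants via isotropy groups).**  Let `𝒢` be a
finite, not necessarily connected, groupoid and `α` a unital global action of `𝒢` on a
commutative ring `S = ⊕_{y∈𝒢₀} S_y` with `1_g ≠ 0` for all `g`, and suppose `S` is an
`α_𝒢`-partial Galois extension of `S^{α_𝒢}`.  Let `ℋ` be a wide subgroupoid of `𝒢`, let
`𝒢 = 𝒢₁ ∪̇ … ∪̇ 𝒢_r` be the decomposition of `𝒢` into connected components (object sets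
`Z_j`), `ℋ_j := ℋ ∩ 𝒢_j`, and let `ℋ_j = ℋ_{j,1} ∪̇ … ∪̇ ℋ_{j,n_j}` be the decomposition
of `ℋ_j` into connected components with object sets `Y_{j,i}` and chosen
`y_{j,i} ∈ Y_{j,i}`.  Then `S^{α_ℋ}` is isomorphic as a ring (via an additive and
multiplicative bijection) to `⊕_{j=1}^r ⊕_{i=1}^{n_j} S_{y_{j,i}}^{α_{ℋ_{j,i}(y_{j,i})}}`. -/
theorem global_invariants_isotropy_decomposition
    {Obj : Type*} [Groupoid Obj] [Fintype Obj] [∀ a b : Obj, Finite (a ⟶ b)]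
    {S : Type*} [CommRing S] (α : UPA Obj S)
    (hsum : ∑ y : Obj, α.e (𝟙 y) = 1)
    (horth : ∀ y z : Obj, y ≠ z → α.e (𝟙 y) * α.e (𝟙 z) = 0)
    (hglobal : ∀ ⦃a b : Obj⦄ (g : a ⟶ b), α.e g = α.e (𝟙 b))
    (hne : ∀ ⦃a b : Obj⦄ (g : a ⟶ b), α.e g ≠ 0)
    (hGal : α.IsGaloisCoordSystem (Subgroupoid.full (Set.univ : Set Obj)) (Set.univ : Set S))
    (H : Subgroupoid Obj) (hwide : H.IsWide)
    (r : ℕ) (Z : Fin r → Set Obj)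
    (hZconn : ∀ j, ∀ u ∈ Z j, ∀ v ∈ Z j, Nonempty (u ⟶ v))
    (hZdisj : ∀ j k, j ≠ k → ∀ u ∈ Z j, ∀ v ∈ Z k, IsEmpty (u ⟶ v))
    (hZcover : ∀ u : Obj, ∃ j, u ∈ Z j)
    (n : Fin r → ℕ) (Y : ∀ j : Fin r, Fin (n j) → Set Obj)
    (hYZ : ∀ j i, Y j i ⊆ Z j)
    (hYconn : ∀ j i, ∀ u ∈ Y j i, ∀ v ∈ Y j i, (H.arrows u v).Nonempty)
    (hYdisj : ∀ (j j' : Fin r) (i : Fin (n j)) (i' : Fin (n j')),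
        (⟨j, i⟩ : Σ j : Fin r, Fin (n j)) ≠ ⟨j', i'⟩ →
        ∀ u ∈ Y j i, ∀ v ∈ Y j' i', H.arrows u v = ∅)
    (hYcover : ∀ u : Obj, ∃ j i, u ∈ Y j i)
    (y : ∀ j : Fin r, Fin (n j) → Obj) (hy : ∀ j i, y j i ∈ Y j i) :
    ∃ f : S → S,
      Set.BijOn f (α.invSet H)
        {s : S | ∃ c : ∀ j : Fin r, Fin (n j) → S,
          (∀ j i, c j i ∈ α.grpInvSet (y j i) (H.arrows (y j i) (y j i))) ∧
          s = ∑ j, ∑ i, c j i} ∧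
      (∀ a b : S, a ∈ α.invSet H → b ∈ α.invSet H → f (a + b) = f a + f b) ∧
      (∀ a b : S, a ∈ α.invSet H → b ∈ α.invSet H → f (a * b) = f a * f b) := by
  classical
  -- choose a component for each object
  choose J I hU using hYcover
  -- components are disjoint (given an arrow in H between objects in them)
  have hcomp2 : ∀ (a b : Obj) (j : Fin r) (i : Fin (n j)) (j' : Fin r) (i' : Fin (n j')),
      a ∈ Y j i → b ∈ Y j' i' → (H.arrows a b).Nonempty →
      (⟨j, i⟩ : Σ j : Fin r, Fin (n j)) = ⟨j', i'⟩ := by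
    intro a b j i j' i' h1 h2 hne'
    by_contra hne2
    obtain ⟨g, hg⟩ := hne'
    rw [hYdisj j j' i i' hne2 a h1 b h2] at hg
    exact absurd hg (Set.notMem_empty g)
  have hcomp : ∀ (u : Obj) (j : Fin r) (i : Fin (n j)) (j' : Fin r) (i' : Fin (n j')),
      u ∈ Y j i → u ∈ Y j' i' → (⟨j, i⟩ : Σ j : Fin r, Fin (n j)) = ⟨j', i'⟩ :=
    fun u j i j' i' h1 h2 => hcomp2 u u j i j' i' h1 h2 ⟨𝟙 u, hwide.id_mem u⟩
  have yne : ∀ (j : Fin r) (i : Fin (n j)) (j' : Fin r) (i' : Fin (n j')),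
      (⟨j, i⟩ : Σ j : Fin r, Fin (n j)) ≠ ⟨j', i'⟩ → y j i ≠ y j' i' := by
    intro j i j' i' hne' heq
    exact hne' (hcomp (y j i) j i j' i' (hy j i) (heq ▸ hy j' i'))
  -- a transversal from the chosen base points, inside H
  have hσ0 : ∀ u : Obj, (H.arrows (y (J u) (I u)) u).Nonempty :=
    fun u => hYconn (J u) (I u) _ (hy _ _) u (hU u)
  choose σ hσmem using hσ0
  -- the map
  set f : S → S := fun s => ∑ j, ∑ i, s * α.e (𝟙 (y j i)) with hf
  -- corner extraction for f
  have corner_f : ∀ (s : S) (j : Fin r) (i : Fin (n j)),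
      f s * α.e (𝟙 (y j i)) = s * α.e (𝟙 (y j i)) := by
    intro s j i
    rw [hf]
    simp only
    rw [Finset.sum_mul, Finset.sum_eq_single j]
    · rw [Finset.sum_mul, Finset.sum_eq_single i]
      · rw [mul_assoc, α.idem]
      · intro i' _ hii
        have hne3 : y j i' ≠ y j i := yne j i' j i (by simp [hii])
        rw [mul_assoc, horth _ _ hne3, mul_zero]
      · intro hmem; exact absurd (Finset.mem_univ i) hmem
    · intro j' _ hjj
      rw [Finset.sum_mul]
      apply Finset.sum_eq_zero
      intro i' _
      have hne3 : y j' i' ≠ y j i := yne j' i' j i (by simp [hjj])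
      rw [mul_assoc, horth _ _ hne3, mul_zero]
    · intro hmem; exact absurd (Finset.mem_univ j) hmem
  -- corner description of an invariant element
  have corner_inv : ∀ (s : S), s ∈ α.invSet H → ∀ u : Obj,
      s * α.e (𝟙 u) = α.act (σ u) (s * α.e (𝟙 (y (J u) (I u)))) := by
    intro s hs u
    have h1 : α.e (Groupoid.inv (σ u)) = α.e (𝟙 (y (J u) (I u))) := hglobal _
    rw [← h1, α.act_proj, hs (σ u) (hσmem u), hglobal (σ u)]
  -- every element is the sum of its corners
  have total : ∀ s : S, s = ∑ u : Obj, s * α.e (𝟙 u) := by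
    intro s
    rw [← Finset.mul_sum, hsum, mul_one]
  refine ⟨f, ⟨?_, ?_, ?_⟩, ?_, ?_⟩
  · -- MapsTo
    intro s hs
    refine ⟨fun j i => s * α.e (𝟙 (y j i)), fun j i => ⟨?_, ?_⟩, rfl⟩
    · rw [mul_assoc, α.idem]
    · intro g hg
      show α.act g (s * α.e (𝟙 (y j i))) = s * α.e (𝟙 (y j i)) * α.e g
      have hinv : α.e (Groupoid.inv g) = α.e (𝟙 (y j i)) := hglobal _
      rw [mul_assoc]
      have he : α.e (𝟙 (y j i)) * α.e g = α.e g := by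
        rw [hglobal g, α.idem]
      rw [he, ← hinv, α.act_proj, hs g hg]
  · -- InjOn
    intro s hs t ht hft
    have hcor : ∀ (j : Fin r) (i : Fin (n j)),
        s * α.e (𝟙 (y j i)) = t * α.e (𝟙 (y j i)) := by
      intro j i
      rw [← corner_f s j i, ← corner_f t j i, hft]
    rw [total s, total t]
    apply Finset.sum_congr rfl
    intro u _
    rw [corner_inv s hs u, corner_inv t ht u, hcor]
  · -- SurjOn
    rintro t ⟨c, hc, rfl⟩
    set s : S := ∑ u : Obj, α.act (σ u) (c (J u) (I u)) with hsdef
    have hmem : ∀ (v : Obj) (x : S), α.act (σ v) x * α.e (𝟙 v) = α.act (σ v) x := by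
      intro v x; rw [← hglobal (σ v), α.act_mem]
    have L1s : ∀ u : Obj, s * α.e (𝟙 u) = α.act (σ u) (c (J u) (I u)) := by
      intro u
      rw [hsdef, Finset.sum_mul, Finset.sum_eq_single u]
      · exact hmem u _
      · intro v _ hvu
        rw [← hmem v _, mul_assoc, horth v u hvu, mul_zero]
      · intro hmem'; exact absurd (Finset.mem_univ u) hmem'
    have L2s : ∀ (j : Fin r) (i : Fin (n j)), s * α.e (𝟙 (y j i)) = c j i := by
      intro j i
      rw [L1s (y j i)]
      have hJI : (⟨J (y j i), I (y j i)⟩ : Σ j : Fin r, Fin (n j)) = ⟨j, i⟩ :=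
        hcomp (y j i) _ _ j i (hU (y j i)) (hy j i)
      have gen : ∀ (p : Σ j : Fin r, Fin (n j)), p = ⟨j, i⟩ →
          ∀ (g : y p.1 p.2 ⟶ y j i), g ∈ H.arrows (y p.1 p.2) (y j i) →
          α.act g (c p.1 p.2) = c j i := by
        rintro p rfl g hg
        rw [(hc j i).2 g hg, hglobal g, (hc j i).1]
      exact gen ⟨J (y j i), I (y j i)⟩ hJI (σ (y j i)) (hσmem (y j i))
    have hsInv : s ∈ α.invSet H := by
      intro a b h hH
      have hab : (⟨J a, I a⟩ : Σ j : Fin r, Fin (n j)) = ⟨J b, I b⟩ :=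
        hcomp2 a b _ _ _ _ (hU a) (hU b) ⟨h, hH⟩
      have e_inv : α.e (Groupoid.inv h) = α.e (𝟙 a) := hglobal _
      have step1 : α.act h s = α.act (σ a ≫ h) (c (J a) (I a)) * α.e h := by
        conv_lhs => rw [← α.act_proj h s, e_inv, L1s a, α.act_comp]
      have gen2 : ∀ (p : Σ j : Fin r, Fin (n j)), p = ⟨J b, I b⟩ →
          ∀ (g : y p.1 p.2 ⟶ b), g ∈ H.arrows (y p.1 p.2) b →
          α.act g (c p.1 p.2) * α.e (𝟙 b) = α.act (σ b) (c (J b) (I b)) := by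
        rintro p rfl g hg
        have hτ : g ≫ Groupoid.inv (σ b) ∈
            H.arrows (y (J b) (I b)) (y (J b) (I b)) := H.mul hg (H.inv (hσmem b))
        have hloop : α.act (g ≫ Groupoid.inv (σ b)) (c (J b) (I b)) = c (J b) (I b) := by
          rw [(hc (J b) (I b)).2 _ hτ, hglobal, (hc (J b) (I b)).1]
        have hcmp : (g ≫ Groupoid.inv (σ b)) ≫ σ b = g := by
          rw [Category.assoc, Groupoid.inv_comp, Category.comp_id]
        conv_rhs => rw [← hloop, α.act_comp, hcmp, hglobal (σ b)]
      have step2 : α.act (σ a ≫ h) (c (J a) (I a)) * α.e (𝟙 b)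
          = α.act (σ b) (c (J b) (I b)) :=
        gen2 ⟨J a, I a⟩ hab (σ a ≫ h) (H.mul (hσmem a) hH)
      rw [step1, hglobal h, step2, ← L1s b]
    refine ⟨s, hsInv, ?_⟩
    rw [hf]
    simp only
    exact Finset.sum_congr rfl fun j _ => Finset.sum_congr rfl fun i _ => L2s j i
  · -- additive
    intro a b _ _
    rw [hf]
    simp only [add_mul, Finset.sum_add_distrib]
  · -- multiplicative
    intro a b _ _
    rw [hf]
    simp only
    rw [Finset.mul_sum]
    apply Finset.sum_congr rfl
    intro j _
    rw [Finset.mul_sum]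
    apply Finset.sum_congr rfl
    intro i _
    calc a * b * α.e (𝟙 (y j i))
        = b * ((∑ j', ∑ i', a * α.e (𝟙 (y j' i'))) * α.e (𝟙 (y j i))) := by
          rw [corner_f a j i]; ring
      _ = (∑ j', ∑ i', a * α.e (𝟙 (y j' i'))) * (b * α.e (𝟙 (y j i))) := by ring

end PaperGalois
end
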